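/- arXiv:1705.00167 — 5 statements merged into one kernel-verified Lean document; each statement's English description precedes it below -/
import Mathlib

section
/- Let σ: 𝒜 → ℬ⁺ be a non-erasing morphism between finite alphabets that is not injective on 𝒜^ℤ. Then σ = σ̃ ∘ τ for some finite alphabet 𝒜̃ and non-erasing morphisms τ: 𝒜 → 𝒜̃⁺ and σ̃: 𝒜̃ → ℬ⁺ with |𝒜̃| < |𝒜| and ⦀σ̃⦀ < ⦀σ⦀. Moreover, if σ is not injective on 𝒜^ℕ, then σ̃ can be chosen so that each word σ̃(a), a ∈ 𝒜̃, is a prefix of some word σ(b), b ∈ 𝒜. -/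
open scoped BigOperators

namespace Recog

variable {A B C : Type*}

/-- A morphism assigning a word to each letter is non-erasing if every image is nonempty. -/
def NonErasing (σ : A → List B) : Prop := ∀ a, σ a ≠ []

/-- Apply a morphism letterwise to a finite word, concatenating the images. -/
def wordApply (σ : A → List B) : List A → List B
  | [] => []
  | a :: w => σ a ++ wordApply σ w

/-- Composition of morphisms `τ ∘ σ`. -/
def comp (τ : B → List C) (σ : A → List B) : A → List C := fun a => wordApply τ (σ a)

/-- The `ℓ`-th cutting point of the representation `(0, x)`:
`|σ(x_[0,ℓ))|` for `ℓ ≥ 0` and `-|σ(x_[ℓ,0))|` for `ℓ < 0`. -/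
def cut (σ : A → List B) (x : ℤ → A) (ℓ : ℤ) : ℤ :=
  if 0 ≤ ℓ then ∑ i ∈ Finset.range ℓ.toNat, ((σ (x i)).length : ℤ)
  else -∑ i ∈ Finset.range (-ℓ).toNat, ((σ (x (-(i : ℤ) - 1))).length : ℤ)

/-- `y` is the bi-infinite image `σ(x)`, where `σ(x₀)` starts at position `0`. -/
def IsSubstPt (σ : A → List B) (x : ℤ → A) (y : ℤ → B) : Prop :=
  ∀ (ℓ : ℤ) (j : ℕ) (hj : j < (σ (x ℓ)).length),
    y (cut σ x ℓ + j) = (σ (x ℓ)).get ⟨j, hj⟩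

/-- `(k, x)` is a `σ`-representation of `y`, i.e. `y = T^k σ(x)`. -/
def IsRep (σ : A → List B) (y : ℤ → B) (k : ℤ) (x : ℤ → A) : Prop :=
  IsSubstPt σ x fun n => y (n - k)

/-- `(k, x)` is a centered `σ`-representation of `y`: `y = T^k σ(x)` with `0 ≤ k < |σ(x₀)|`. -/
def IsCenteredRep (σ : A → List B) (y : ℤ → B) (k : ℤ) (x : ℤ → A) : Prop :=
  IsRep σ y k x ∧ 0 ≤ k ∧ k < ((σ (x 0)).length : ℤ)

/-- `y` is aperiodic: `T^p y ≠ y` for all `p ≥ 1`. -/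
def Aperiodic (y : ℤ → B) : Prop := ∀ p : ℕ, 1 ≤ p → (fun n => y (n + p)) ≠ y

/-- `y` is periodic: `T^p y = y` for some `p ≥ 1`. -/
def Periodic (y : ℤ → B) : Prop := ∃ p : ℕ, 1 ≤ p ∧ (fun n => y (n + p)) = y

/-- The set of `σ`-cutting points of the representation `(k, x)`. -/
def cutSet (σ : A → List B) (x : ℤ → A) (k : ℤ) : Set ℤ :=
  {m : ℤ | ∃ ℓ : ℤ, m = cut σ x ℓ - k}

/-- `σ` is recognizable in `X`: every `y` has at most one centered `σ`-representation in `X`. -/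
def RecIn (σ : A → List B) (X : Set (ℤ → A)) : Prop :=
  ∀ (y : ℤ → B) (k k' : ℤ) (x x' : ℤ → A), x ∈ X → x' ∈ X →
    IsCenteredRep σ y k x → IsCenteredRep σ y k' x' → k = k' ∧ x = x'

/-- `σ` is recognizable in `X` for aperiodic points. -/
def RecInAp (σ : A → List B) (X : Set (ℤ → A)) : Prop :=
  ∀ y : ℤ → B, Aperiodic y → ∀ (k k' : ℤ) (x x' : ℤ → A), x ∈ X → x' ∈ X →
    IsCenteredRep σ y k x → IsCenteredRep σ y k' x' → k = k' ∧ x = x'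

/-- `σ` is left permutative: the first letters of `σ a` and `σ b` differ for distinct `a, b`. -/
def LeftPermutative (σ : A → List B) : Prop :=
  ∀ a b : A, a ≠ b → (σ a).head? ≠ (σ b).head?

/-- `σ` is right permutative: the last letters of `σ a` and `σ b` differ for distinct `a, b`. -/
def RightPermutative (σ : A → List B) : Prop :=
  ∀ a b : A, a ≠ b → (σ a).getLast? ≠ (σ b).getLast?

/-- `σ` and `σ'` are rotationally conjugate. -/
def RotConj (σ σ' : A → List B) : Prop :=
  ∃ w : List B, (∀ a, σ a ++ w = w ++ σ' a) ∨ (∀ a, w ++ σ a = σ' a ++ w)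

/-- The incidence matrix of `σ`, over `ℚ`: entry `(b, a)` counts occurrences of `b` in `σ a`. -/
noncomputable def incidence (σ : A → List B) [DecidableEq B] : Matrix B A ℚ :=
  Matrix.of fun b a => ((σ a).count b : ℚ)

/-- The finite subword `x_[i, i+m)` of a bi-infinite sequence. -/
def factor (x : ℤ → A) (i : ℤ) (m : ℕ) : List A := (List.range m).map fun j => x (i + j)

/-- The language of a bi-infinite sequence: the set of its finite subwords. -/
def lang (x : ℤ → A) : Set (List A) := {w | ∃ (i : ℤ) (m : ℕ), w = factor x i m}

/-- `σ` is injective on bi-infinite sequences. -/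
def InjZ (σ : A → List B) : Prop :=
  ∀ (x x' : ℤ → A) (y : ℤ → B), IsSubstPt σ x y → IsSubstPt σ x' y → x = x'

/-- Cutting points for one-sided sequences. -/
def cutN (σ : A → List B) (x : ℕ → A) (ℓ : ℕ) : ℕ :=
  ∑ i ∈ Finset.range ℓ, (σ (x i)).length

/-- `y` is the one-sided image `σ(x)` for `x : ℕ → A`. -/
def IsSubstPtN (σ : A → List B) (x : ℕ → A) (y : ℕ → B) : Prop :=
  ∀ (ℓ j : ℕ) (hj : j < (σ (x ℓ)).length),
    y (cutN σ x ℓ + j) = (σ (x ℓ)).get ⟨j, hj⟩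

/-- `σ` is injective on one-sided (right-infinite) sequences. -/
def InjN (σ : A → List B) : Prop :=
  ∀ (x x' : ℕ → A) (y : ℕ → B), IsSubstPtN σ x y → IsSubstPtN σ x' y → x = x'

/-- The total length `⦀σ⦀ = Σ_a |σ a|`. -/
def totalLen (σ : A → List B) [Fintype A] : ℕ := ∑ a, (σ a).length

/-- `X` is invariant under the two-sided shift. -/
def ShiftInvariant (X : Set (ℤ → A)) : Prop :=
  ∀ x ∈ X, (fun n => x (n + 1)) ∈ X ∧ (fun n => x (n - 1)) ∈ X

/-- The iterate `σ^n` of a substitution, applied to a letter. -/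
def iter (σ : A → List A) : ℕ → A → List A
  | 0, a => [a]
  | n + 1, a => wordApply (iter σ n) (σ a)

/-- The language `ℒ_σ` of a substitution: subwords of the `σ^n(a)`. -/
def subLang (σ : A → List A) : Set (List A) := {w | ∃ (n : ℕ) (a : A), w <:+: iter σ n a}

/-- The substitutive shift `X_σ`. -/
def subX (σ : A → List A) : Set (ℤ → A) := {x | ∀ w ∈ lang x, w ∈ subLang σ}

/-- `σ` is recognizable in the sense of Mossé for `x`. -/
def MosseRec (σ : A → List B) (x : ℤ → A) : Prop :=
  ∃ ℓ : ℕ, ∀ y : ℤ → B, IsSubstPt σ x y →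
    ∀ m ∈ cutSet σ x 0, ∀ m' : ℤ,
      factor y (m - ℓ) (2 * ℓ) = factor y (m' - ℓ) (2 * ℓ) → m' ∈ cutSet σ x 0

section Sadic

variable {𝒜 : ℕ → Type*}

/-- `block σ N = σ_[0,N)`, mapping a letter of `𝒜 N` to a word over `𝒜 0`. -/
def block (σ : ∀ n, 𝒜 (n + 1) → List (𝒜 n)) : ∀ N, 𝒜 N → List (𝒜 0)
  | 0, a => [a]
  | N + 1, a => wordApply (block σ N) (σ N a)

/-- `blockFrom σ n k = σ_[n,n+k)`, mapping a letter of `𝒜 (n+k)` to a word over `𝒜 n`. -/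
def blockFrom (σ : ∀ n, 𝒜 (n + 1) → List (𝒜 n)) (n k : ℕ) : 𝒜 (n + k) → List (𝒜 n) :=
  block (𝒜 := fun m => 𝒜 (n + m)) (fun m => σ (n + m)) k

/-- The language `ℒ^(n)_σ` of a directive sequence. -/
def sadicLang (σ : ∀ n, 𝒜 (n + 1) → List (𝒜 n)) (n : ℕ) : Set (List (𝒜 n)) :=
  {w | ∃ (k : ℕ) (a : 𝒜 (n + k)), 1 ≤ k ∧ w <:+: blockFrom σ n k a}

/-- The shift `X^(n)_σ` of a directive sequence. -/
def sadicX (σ : ∀ n, 𝒜 (n + 1) → List (𝒜 n)) (n : ℕ) : Set (ℤ → 𝒜 n) :=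
  {x | ∀ w ∈ lang x, w ∈ sadicLang σ n}

/-- A directive sequence is everywhere growing if `min_a |σ_[0,n)(a)| → ∞`. -/
def EverywhereGrowing (σ : ∀ n, 𝒜 (n + 1) → List (𝒜 n)) : Prop :=
  ∀ m : ℕ, ∃ N : ℕ, ∀ n ≥ N, ∀ a : 𝒜 n, m ≤ (block σ n a).length

end Sadic

end Recog

namespace Recog

variable {A A' B C : Type*}

theorem wordApply_append (f : A → List B) : ∀ u v : List A,
    wordApply f (u ++ v) = wordApply f u ++ wordApply f v
  | [], v => rfl
  | a :: u, v => by simp [wordApply, wordApply_append f u v]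

theorem wordApply_congr {f g : A → List B} : ∀ {l : List A}, (∀ a ∈ l, f a = g a) →
    wordApply f l = wordApply g l
  | [], _ => rfl
  | a :: l, h => by
      simp only [wordApply, h a (by simp)]
      rw [wordApply_congr fun b hb => h b (by simp [hb])]

theorem wordApply_map (f : B → List C) (g : A → B) : ∀ l : List A,
    wordApply f (l.map g) = wordApply (fun a => f (g a)) l
  | [] => rfl
  | a :: l => by simp [wordApply, wordApply_map f g l]

theorem wordApply_wordApply (f : B → List C) (g : A → List B) : ∀ l : List A,
    wordApply f (wordApply g l) = wordApply (fun a => wordApply f (g a)) l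
  | [] => rfl
  | a :: l => by simp [wordApply, wordApply_append, wordApply_wordApply f g l]

theorem wordApply_ne_nil {f : A → List B} (hf : NonErasing f) {l : List A} (hl : l ≠ []) :
    wordApply f l ≠ [] := by
  cases l with
  | nil => exact absurd rfl hl
  | cons a l => simp [wordApply, hf a]

theorem wordApply_prefix (f : A → List B) {u v : List A} (h : u <+: v) :
    wordApply f u <+: wordApply f v := by
  obtain ⟨t, rfl⟩ := h
  rw [wordApply_append]
  exact List.prefix_append _ _

theorem wordApply_reverse (f : A → List B) : ∀ l : List A,
    (wordApply f l).reverse = wordApply (fun a => (f a).reverse) l.reverse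
  | [] => rfl
  | a :: l => by
      simp only [wordApply, List.reverse_append, List.reverse_cons,
        wordApply_append, wordApply_reverse f l]
      simp [wordApply]

theorem cutN_zero (σ : A → List B) (x : ℕ → A) : cutN σ x 0 = 0 := rfl

theorem cutN_succ (σ : A → List B) (x : ℕ → A) (n : ℕ) :
    cutN σ x (n + 1) = cutN σ x n + (σ (x n)).length := Finset.sum_range_succ _ n

theorem cutN_eq_length (σ : A → List B) (x : ℕ → A) : ∀ n,
    cutN σ x n = (wordApply σ ((List.range n).map x)).length
  | 0 => rfl
  | n + 1 => by
      rw [cutN_succ, cutN_eq_length σ x n, List.range_succ, List.map_append,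
        wordApply_append]
      simp [wordApply]

theorem cutN_le {σ : A → List B} (hσ : NonErasing σ) (x : ℕ → A) : ∀ n, n ≤ cutN σ x n
  | 0 => le_rfl
  | n + 1 => by
      rw [cutN_succ]
      have h1 : 1 ≤ (σ (x n)).length := List.length_pos_iff.mpr (hσ (x n))
      have := cutN_le hσ x n
      omega

theorem seg_eq {σ : A → List B} {x : ℕ → A} {y : ℕ → B} (h : IsSubstPtN σ x y) (ℓ : ℕ) :
    (List.range (σ (x ℓ)).length).map (fun j => y (cutN σ x ℓ + j)) = σ (x ℓ) := by
  apply List.ext_get (by simp)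
  intro i h1 h2
  simp only [List.get_eq_getElem, List.getElem_map, List.getElem_range]
  exact h ℓ i h2

theorem pref_eq {σ : A → List B} {x : ℕ → A} {y : ℕ → B} (h : IsSubstPtN σ x y) : ∀ n,
    (List.range (cutN σ x n)).map y = wordApply σ ((List.range n).map x)
  | 0 => rfl
  | n + 1 => by
      rw [cutN_succ, List.range_add, List.map_append, pref_eq h n, List.range_succ,
        List.map_append, wordApply_append, List.map_map]
      congr 1
      have := seg_eq h n
      simp only [Function.comp_def]
      rw [this]
      simp [wordApply]

theorem substPtN_of_pref {σ : A → List B} {x : ℕ → A} {y : ℕ → B}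
    (h : ∀ n, (List.range (cutN σ x n)).map y = wordApply σ ((List.range n).map x)) :
    IsSubstPtN σ x y := by
  intro ℓ j hj
  have h2 := h (ℓ + 1)
  rw [cutN_succ, List.range_add, List.map_append, h ℓ, List.range_succ, List.map_append,
    wordApply_append] at h2
  have h3 := List.append_cancel_left h2
  rw [List.map_map] at h3
  have h4 : (List.range (σ (x ℓ)).length).map (fun i => y (cutN σ x ℓ + i)) = σ (x ℓ) := by
    simp only [Function.comp_def] at h3
    rw [h3]
    simp [wordApply]
  have h5 := List.get_of_eq h4.symm ⟨j, hj⟩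
  simpa using h5.symm

theorem cutN_shift (σ : A → List B) (x : ℕ → A) (ℓ : ℕ) : ∀ m,
    cutN σ x ℓ + cutN σ (fun n => x (ℓ + n)) m = cutN σ x (ℓ + m)
  | 0 => by simp [cutN]
  | m + 1 => by
      rw [cutN_succ, ← add_assoc (cutN σ x ℓ), cutN_shift σ x ℓ m, ← add_assoc ℓ m 1,
        cutN_succ]

theorem substPtN_shift {σ : A → List B} {x : ℕ → A} {y : ℕ → B} (h : IsSubstPtN σ x y)
    (ℓ : ℕ) : IsSubstPtN σ (fun n => x (ℓ + n)) (fun n => y (cutN σ x ℓ + n)) := by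
  intro m j hj
  simp only
  rw [← add_assoc, cutN_shift σ x ℓ m]
  exact h (ℓ + m) j hj

/-- The expansion of `x` under the morphism `ρ`, as an infinite sequence. -/
noncomputable def expSeq (a₀ : A') (ρ : A → List A') (x : ℕ → A) (n : ℕ) : A' :=
  (wordApply ρ ((List.range (n + 1)).map x)).getD n a₀

theorem getD_append_middle (a₀ : C) : ∀ (u : List C) (v w : List C) (j : ℕ)
    (hj : j < v.length), (u ++ v ++ w).getD (u.length + j) a₀ = v.get ⟨j, hj⟩
  | [], v, w, j, hj => by
      simp only [List.nil_append, List.length_nil, Nat.zero_add]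
      rw [List.getD_append _ _ _ _ hj]
      rw [List.getD_eq_getElem?_getD, List.getElem?_eq_getElem hj]; rfl
  | c :: u, v, w, j, hj => by
      simp only [List.cons_append, List.length_cons, List.getD_cons_succ,
        Nat.succ_add]
      exact getD_append_middle a₀ u v w j hj

theorem expSeq_substPt {ρ : A → List A'} (hρ : NonErasing ρ) (a₀ : A') (x : ℕ → A) :
    IsSubstPtN ρ x (expSeq a₀ ρ x) := by
  intro ℓ j hj
  have hℓn : ℓ ≤ cutN ρ x ℓ + j := le_trans (cutN_le hρ x ℓ) (Nat.le_add_right _ _)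
  have hsplit : (List.range (cutN ρ x ℓ + j + 1)).map x
      = (List.range ℓ).map x ++ [x ℓ]
        ++ ((List.range (cutN ρ x ℓ + j + 1 - (ℓ + 1))).map fun i => x (ℓ + 1 + i)) := by
    rw [show cutN ρ x ℓ + j + 1 = (ℓ + 1) + (cutN ρ x ℓ + j + 1 - (ℓ + 1)) by omega,
      List.range_add, List.map_append, List.map_map, List.range_succ, List.map_append]
    simp [Function.comp_def]
  unfold expSeq
  rw [hsplit, wordApply_append, wordApply_append]
  have := getD_append_middle a₀ (wordApply ρ ((List.range ℓ).map x))
    (wordApply ρ [x ℓ]) (wordApply ρ ((List.range (cutN ρ x ℓ + j + 1 - (ℓ + 1))).map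
      fun i => x (ℓ + 1 + i))) j (by simpa [wordApply] using hj)
  rw [← cutN_eq_length ρ x ℓ] at this
  rw [this]
  have : wordApply ρ [x ℓ] = ρ (x ℓ) := by simp [wordApply]
  exact List.get_of_eq this ⟨j, _⟩

theorem cutN_decomp {ρ : A → List A'} (hρ : NonErasing ρ) (x : ℕ → A) (n : ℕ) :
    ∃ m r, n = cutN ρ x m + r ∧ r < (ρ (x m)).length := by
  have hex : ∃ m, n < cutN ρ x m := ⟨n + 1, lt_of_lt_of_le (Nat.lt_succ_self n)
    (cutN_le hρ x (n + 1))⟩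
  have hN1 : 1 ≤ Nat.find hex := by
    rcases Nat.eq_zero_or_pos (Nat.find hex) with h | h
    · have := Nat.find_spec hex
      rw [h] at this
      simp [cutN] at this
    · exact h
  set m := Nat.find hex - 1 with hm
  have h1 : ¬ n < cutN ρ x m := Nat.find_min hex (by omega)
  have h2 : n < cutN ρ x (m + 1) := by
    rw [show m + 1 = Nat.find hex by omega]
    exact Nat.find_spec hex
  rw [cutN_succ] at h2
  exact ⟨m, n - cutN ρ x m, by omega, by omega⟩

theorem substPt_comp {ρ : A → List A'} {σ₁ : A' → List B} {σ : A → List B}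
    (hcomp : ∀ a, wordApply σ₁ (ρ a) = σ a) (hρ : NonErasing ρ)
    {x : ℕ → A} {z : ℕ → A'} {y : ℕ → B}
    (hz : IsSubstPtN ρ x z) (hy : IsSubstPtN σ x y) : IsSubstPtN σ₁ z y := by
  apply substPtN_of_pref
  intro n
  obtain ⟨m, r, rfl, hr⟩ := cutN_decomp hρ x n
  -- z-prefix splits
  have hzpref : (List.range (cutN ρ x m + r)).map z
      = wordApply ρ ((List.range m).map x) ++ (ρ (x m)).take r := by
    rw [List.range_add, List.map_append, pref_eq hz m, List.map_map]
    congr 1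
    apply List.ext_get (by simp; omega)
    intro i h1 h2
    have hi : i < r := by simpa using h1
    have := hz m i (lt_trans hi hr)
    simp only [List.get_eq_getElem, List.getElem_map, List.getElem_range, Function.comp_def]
    simp only [List.get_eq_getElem] at this ⊢
    rw [List.getElem_take]
    exact this
  -- apply σ₁ to the prefix
  have himg : wordApply σ₁ ((List.range (cutN ρ x m + r)).map z)
      = wordApply σ ((List.range m).map x) ++ wordApply σ₁ ((ρ (x m)).take r) := by
    rw [hzpref, wordApply_append, wordApply_wordApply]
    congr 1
    exact wordApply_congr fun a _ => hcomp a
  set q := (wordApply σ₁ ((ρ (x m)).take r)).length with hq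
  -- compute the cut point
  have hcut : cutN σ₁ z (cutN ρ x m + r) = cutN σ x m + q := by
    rw [cutN_eq_length σ₁ z, himg, List.length_append, ← cutN_eq_length]
  rw [hcut, himg]
  -- split the y-prefix
  rw [List.range_add, List.map_append, pref_eq hy m, List.map_map]
  congr 1
  -- the tail: map (y ∘ (cutN σ x m + ·)) (range q) = wordApply σ₁ ((ρ (x m)).take r)
  have hpfx : wordApply σ₁ ((ρ (x m)).take r) <+: σ (x m) := by
    rw [← hcomp (x m)]
    exact wordApply_prefix σ₁ (List.take_prefix r _)
  have hqle : q ≤ (σ (x m)).length := hpfx.length_le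
  have hW := seg_eq hy m
  have : wordApply σ₁ ((ρ (x m)).take r) = (σ (x m)).take q :=
    List.prefix_iff_eq_take.mp hpfx
  rw [this, ← hW, ← List.map_take, List.take_range, Nat.min_eq_left hqle]
  simp [Function.comp_def]

theorem normWitness {σ : A → List B} (h : ¬ InjN σ) :
    ∃ (x x' : ℕ → A) (y : ℕ → B), IsSubstPtN σ x y ∧ IsSubstPtN σ x' y ∧ x 0 ≠ x' 0 ∧
      (σ (x 0)).length ≤ (σ (x' 0)).length := by
  classical
  simp only [InjN, not_forall] at h
  obtain ⟨x, x', y, hx, hx', hne⟩ := h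
  have hex : ∃ n, x n ≠ x' n := by
    by_contra hc
    push_neg at hc
    exact hne (funext hc)
  set ℓ := Nat.find hex with hℓ
  have agree : ∀ i < ℓ, x i = x' i := fun i hi => not_not.mp (Nat.find_min hex hi)
  have hd : x ℓ ≠ x' ℓ := Nat.find_spec hex
  have hcut : cutN σ x ℓ = cutN σ x' ℓ :=
    Finset.sum_congr rfl fun i hi => by rw [agree i (Finset.mem_range.mp hi)]
  have H1 := substPtN_shift hx ℓ
  have H2 := substPtN_shift hx' ℓ
  rw [← hcut] at H2
  by_cases hlen : (σ (x ℓ)).length ≤ (σ (x' ℓ)).length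
  · exact ⟨_, _, _, H1, H2, by simpa using hd, by simpa using hlen⟩
  · exact ⟨_, _, _, H2, H1, by simpa using hd.symm, by simpa using le_of_not_ge hlen⟩

theorem core {A B : Type*} [Fintype A] :
    ∀ (N : ℕ) (σ : A → List B), totalLen σ ≤ N → NonErasing σ → ¬ InjN σ →
    ∃ (m : ℕ) (τ : A → List (Fin m)) (σ' : Fin m → List B),
      NonErasing τ ∧ NonErasing σ' ∧ m < Fintype.card A ∧
      totalLen σ' < totalLen σ ∧ (∀ a, comp σ' τ a = σ a) ∧
      (∀ c, ∃ b, σ' c <+: σ b) := by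
  intro N
  induction N with
  | zero =>
      intro σ hN hσ hInj
      exfalso
      obtain ⟨x, _, _, _, _, _, _⟩ := normWitness hInj
      have h1 : 1 ≤ (σ (x 0)).length := List.length_pos_iff.mpr (hσ (x 0))
      have h2 : (σ (x 0)).length ≤ totalLen σ :=
        Finset.single_le_sum (f := fun a => (σ a).length)
          (fun a _ => Nat.zero_le _) (Finset.mem_univ (x 0))
      omega
  | succ N ih =>
      intro σ hN hσ hInj
      classical
      obtain ⟨x, x', y, hx, hx', hne0, hlen⟩ := normWitness hInj
      set b := x' 0 with hb
      set L := (σ (x' 0)).length with hL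
      have hex : ∃ n, L < cutN σ x n :=
        ⟨L + 1, lt_of_lt_of_le (Nat.lt_succ_self L) (cutN_le hσ x (L + 1))⟩
      have hNf1 : 2 ≤ Nat.find hex := by
        by_contra h
        push_neg at h
        have hs := Nat.find_spec hex
        have hc1 : cutN σ x 1 ≤ L := by
          rw [show (1 : ℕ) = 0 + 1 from rfl, cutN_succ, cutN_zero]
          simpa using hlen
        have : cutN σ x (Nat.find hex) ≤ L := by
          rcases (by omega : Nat.find hex = 0 ∨ Nat.find hex = 1) with h' | h' <;> rw [h']
          · simp [cutN_zero]
          · exact hc1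
        omega
      set k := Nat.find hex - 1 with hk
      have hk1 : 1 ≤ k := by omega
      have hkle : cutN σ x k ≤ L := by
        have := Nat.find_min hex (show k < Nat.find hex by omega)
        omega
      have hklt : L < cutN σ x (k + 1) := by
        rw [show k + 1 = Nat.find hex by omega]
        exact Nat.find_spec hex
      set C := cutN σ x k with hC
      set p : List B := (List.range (L - C)).map fun i => y (C + i) with hp
      -- the word equation σ b = σ(x₀)⋯σ(x_{k-1}) ++ p
      have hyL : (List.range L).map y = σ b := by
        have h1 := pref_eq hx' 1
        rw [show cutN σ x' 1 = L by rw [cutN_succ, cutN_zero]; simp [hL]] at h1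
        rw [h1]
        simp [wordApply, hb]
      have hyC : (List.range C).map y = wordApply σ ((List.range k).map x) := pref_eq hx k
      have hsplit : (List.range L).map y = (List.range C).map y ++ p := by
        rw [show L = C + (L - C) by omega, List.range_add, List.map_append, List.map_map]
        rfl
      have hword : σ b = wordApply σ ((List.range k).map x) ++ p := by
        rw [← hyC, ← hsplit, hyL]
      have hplen : p.length = L - C := by simp [hp]
      have hpfx : p <+: σ (x k) := by
        have hle : L - C ≤ (σ (x k)).length := by
          rw [cutN_succ] at hklt; omega
        have hseg := seg_eq hx k
        rw [← hseg, hp, ← hC]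
        rw [show List.range (L - C) = (List.range (σ (x k)).length).take (L - C) by
          rw [List.take_range, Nat.min_eq_left hle], List.map_take]
        exact List.take_prefix _ _
      have hxib : ∀ i < k, x i ≠ b := by
        intro i hik heq
        have hCdef : C = ∑ j ∈ Finset.range k, (σ (x j)).length := rfl
        have hCsum : (σ (x i)).length + ∑ j ∈ (Finset.range k).erase i,
            (σ (x j)).length = C := by
          rw [hCdef]
          exact Finset.add_sum_erase (Finset.range k) (f := fun j => (σ (x j)).length)
            (Finset.mem_range.mpr hik)
        have h1 : (σ b).length = C + p.length := by
          rw [hword, List.length_append, ← cutN_eq_length]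
        rw [heq] at hCsum
        have hS0 : ∑ j ∈ (Finset.range k).erase i, (σ (x j)).length = 0 ∧ p.length = 0 := by
          constructor <;> omega
        rcases Nat.lt_or_ge k 2 with hk2 | hk2
        · -- k = 1, i = 0, p = []
          have hi0 : i = 0 := by omega
          have hk1' : k = 1 := by omega
          -- then σ b = σ (x 0) and moreover x 0 = b contradicts hne0
          rw [hi0] at heq
          exact hne0 (heq.trans hb.symm ▸ rfl)
        · -- k ≥ 2: some other index j with |σ (x j)| ≥ 1
          obtain ⟨j, hj⟩ : ∃ j, j ∈ (Finset.range k).erase i := by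
            apply Finset.Nonempty.exists_mem
            apply Finset.card_pos.mp
            rw [Finset.card_erase_of_mem (Finset.mem_range.mpr hik), Finset.card_range]
            omega
          have hle2 := Finset.single_le_sum (f := fun j => (σ (x j)).length)
            (fun _ _ => Nat.zero_le _) hj
          have hpos := List.length_pos_iff.mpr (hσ (x j))
          omega
      by_cases hCL : C = L
      · -- CASE I: p = [], merge letter b away
        have hpnil : p = [] := by
          rw [hp, hCL]
          simp
        have hwordI : σ b = wordApply σ ((List.range k).map x) := by
          rw [hword, hpnil, List.append_nil]
        set m := Fintype.card A - 1 with hm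
        have hcardpos : 0 < Fintype.card A := Fintype.card_pos_iff.mpr ⟨b⟩
        have hcard : Fintype.card {c : A // c ≠ b} = m := by
          have h := Fintype.card_subtype_compl (fun c : A => c = b)
          rw [Fintype.card_subtype_eq] at h
          simpa [hm] using h
        set e : {c : A // c ≠ b} ≃ Fin m := Fintype.equivFinOfCardEq hcard with he
        set enc : A → Fin m := fun c => if h : c = b then e ⟨x 0, hne0⟩ else e ⟨c, h⟩
          with henc
        set σ' : Fin m → List B := fun i => σ (e.symm i) with hσ'
        set τ : A → List (Fin m) :=
          fun c => if c = b then ((List.range k).map x).map enc else [enc c] with hτ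
        have hencr : ∀ c (h : c ≠ b), σ' (enc c) = σ c := by
          intro c h
          rw [henc]
          simp only [dif_neg h, hσ', e.symm_apply_apply]
        refine ⟨m, τ, σ', ?_, fun i => hσ (e.symm i), by omega, ?_, ?_, ?_⟩
        · intro c
          simp only [hτ]
          by_cases hc : c = b
          · rw [if_pos hc]
            simp only [ne_eq, List.map_eq_nil_iff, List.range_eq_nil]
            omega
          · rw [if_neg hc]
            simp
        · -- totalLen σ' < totalLen σ
          have e1 : totalLen σ' = ∑ c : {c : A // c ≠ b}, (σ (c : A)).length := by
            rw [totalLen, ← Equiv.sum_comp e (fun i => (σ' i).length)]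
            apply Finset.sum_congr rfl
            intro c _
            simp [hσ', e.symm_apply_apply]
          have h1 : totalLen σ' = ∑ c ∈ Finset.univ.erase b, (σ c).length := by
            rw [e1]
            exact (Finset.sum_subtype (Finset.univ.erase b)
              (p := fun c : A => c ≠ b) (by simp) (fun c => (σ c).length)).symm
          have h2 : (σ b).length + ∑ c ∈ Finset.univ.erase b, (σ c).length = totalLen σ := by
            rw [show totalLen σ = ∑ a, (σ a).length from rfl]
            exact Finset.add_sum_erase _ (fun c => (σ c).length) (Finset.mem_univ b)
          have h3 : 1 ≤ (σ b).length := List.length_pos_iff.mpr (hσ b)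
          omega
        · -- comp σ' τ = σ
          intro c
          simp only [comp, hτ]
          by_cases hc : c = b
          · rw [if_pos hc, wordApply_map]
            rw [wordApply_congr (g := σ) ?_]
            · rw [← hwordI, hc]
            · intro a ha
              simp only [List.mem_map, List.mem_range] at ha
              obtain ⟨i, hik, rfl⟩ := ha
              exact hencr _ (hxib i hik)
          · rw [if_neg hc]
            simp only [wordApply, List.append_nil]
            exact hencr c hc
        · intro c
          exact ⟨e.symm c, List.prefix_refl _⟩
      · -- CASE II: replace σ b by the proper prefix p of σ (x k)
        have hCltL : C < L := lt_of_le_of_ne hkle hCL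
        have hpne : p ≠ [] := by
          rw [hp]
          simp only [ne_eq, List.map_eq_nil_iff, List.range_eq_nil]
          omega
        set σ₁ : A → List B := Function.update σ b p with hσ₁def
        have hσ₁b : σ₁ b = p := Function.update_self b p σ
        have hσ₁ne : ∀ c, c ≠ b → σ₁ c = σ c := fun c hc => Function.update_of_ne hc p σ
        have hσ₁ : NonErasing σ₁ := by
          intro c
          by_cases hc : c = b
          · rw [hc, hσ₁b]; exact hpne
          · rw [hσ₁ne c hc]; exact hσ c
        set ρ : A → List A :=
          fun c => if c = b then ((List.range k).map x) ++ [b] else [c] with hρdef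
        have hρ : NonErasing ρ := by
          intro c
          simp only [hρdef]
          by_cases hc : c = b
          · rw [if_pos hc]; simp
          · rw [if_neg hc]; simp
        have hcomp : ∀ a, wordApply σ₁ (ρ a) = σ a := by
          intro a
          simp only [hρdef]
          by_cases hc : a = b
          · rw [if_pos hc, wordApply_append]
            have h1 : wordApply σ₁ ((List.range k).map x)
                = wordApply σ ((List.range k).map x) := by
              apply wordApply_congr
              intro a ha
              simp only [List.mem_map, List.mem_range] at ha
              obtain ⟨i, hik, rfl⟩ := ha
              exact hσ₁ne _ (hxib i hik)
            rw [h1, hc, hword]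
            simp [wordApply, hσ₁b]
          · rw [if_neg hc]
            simp [wordApply, hσ₁ne a hc]
        -- totalLen decreases
        have htl : totalLen σ₁ < totalLen σ := by
          have h1 : (σ₁ b).length + ∑ c ∈ Finset.univ.erase b, (σ₁ c).length
              = totalLen σ₁ := by
            rw [show totalLen σ₁ = ∑ a, (σ₁ a).length from rfl]
            exact Finset.add_sum_erase _ (fun c => (σ₁ c).length) (Finset.mem_univ b)
          have h2 : (σ b).length + ∑ c ∈ Finset.univ.erase b, (σ c).length = totalLen σ := by
            rw [show totalLen σ = ∑ a, (σ a).length from rfl]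
            exact Finset.add_sum_erase _ (fun c => (σ c).length) (Finset.mem_univ b)
          have h3 : ∑ c ∈ Finset.univ.erase b, (σ₁ c).length
              = ∑ c ∈ Finset.univ.erase b, (σ c).length := by
            apply Finset.sum_congr rfl
            intro c hc
            rw [hσ₁ne c (Finset.ne_of_mem_erase hc)]
          have h4 : (σ b).length = C + p.length := by
            rw [hword, List.length_append, ← cutN_eq_length]
          have h5 : 1 ≤ C := le_trans hk1 (cutN_le hσ x k)
          rw [hσ₁b] at h1
          omega
        -- σ₁ is not injective on one-sided sequences
        set z : ℕ → A := expSeq (x 0) ρ x with hz0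
        set z' : ℕ → A := expSeq (x 0) ρ x' with hz'0
        have hz : IsSubstPtN ρ x z := expSeq_substPt hρ (x 0) x
        have hz' : IsSubstPtN ρ x' z' := expSeq_substPt hρ (x 0) x'
        have hzy : IsSubstPtN σ₁ z y := substPt_comp hcomp hρ hz hx
        have hzy' : IsSubstPtN σ₁ z' y := substPt_comp hcomp hρ hz' hx'
        have hρb : ρ b = ((List.range k).map x) ++ [b] := by rw [hρdef]; simp
        have hρne : ∀ c, c ≠ b → ρ c = [c] := by
          intro c hc; rw [hρdef]; simp [hc]
        have hρblen : (ρ b).length = k + 1 := by rw [hρb]; simp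
        have hzz' : z ≠ z' := by
          have hcutρ : ∀ i ≤ k, cutN ρ x i = i := by
            intro i hi
            induction i with
            | zero => rfl
            | succ i ihi =>
                rw [cutN_succ, ihi (by omega), hρne (x i) (hxib i (by omega))]
                simp
          have hzk : z k = (ρ (x k)).get ⟨0, List.length_pos_iff.mpr (hρ (x k))⟩ := by
            have h := hz k 0 (List.length_pos_iff.mpr (hρ (x k)))
            rwa [hcutρ k le_rfl, Nat.add_zero] at h
          have hz'k : z' k = b := by
            have hlenk : k < (ρ (x' 0)).length := by
              rw [← hb, hρblen]; omega
            have h := hz' 0 k hlenk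
            rw [cutN_zero, Nat.zero_add] at h
            rw [h]
            simp only [List.get_eq_getElem]
            have hre : ρ (x' 0) = List.map x (List.range k) ++ [b] := by rw [← hb, hρb]
            rw [List.getElem_of_eq hre]
            exact List.getElem_concat_length (by simp) _
          have hzkne : z k ≠ b := by
            rw [hzk]
            simp only [List.get_eq_getElem]
            by_cases hxk : x k = b
            · have hre : ρ (x k) = List.map x (List.range k) ++ [b] := by rw [hxk, hρb]
              rw [List.getElem_of_eq hre]
              rw [List.getElem_append_left (by simp; omega)]
              simp only [List.getElem_map, List.getElem_range]
              exact hne0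
            · have hre : ρ (x k) = [x k] := hρne (x k) hxk
              rw [List.getElem_of_eq hre]
              simpa using hxk
          intro hzeq
          rw [hzeq, hz'k] at hzkne
          exact hzkne rfl
        have hInj₁ : ¬ InjN σ₁ := fun hI => hzz' (hI z z' y hzy hzy')
        have hle : totalLen σ₁ ≤ N := by omega
        obtain ⟨m, τ₂, σ₂', h1, h2, h3, h4, h5, h6⟩ := ih σ₁ hle hσ₁ hInj₁
        refine ⟨m, fun c => wordApply τ₂ (ρ c), σ₂', ?_, h2, h3, by omega, ?_, ?_⟩
        · intro c
          exact wordApply_ne_nil h1 (hρ c)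
        · intro c
          simp only [comp]
          rw [wordApply_wordApply]
          rw [wordApply_congr (f := fun a => wordApply σ₂' (τ₂ a)) (g := σ₁)
            fun a _ => h5 a]
          exact hcomp c
        · intro c
          obtain ⟨d, hd⟩ := h6 c
          by_cases hdb : d = b
          · rw [hdb, hσ₁b] at hd
            exact ⟨x k, hd.trans hpfx⟩
          · rw [hσ₁ne d hdb] at hd
            exact ⟨d, hd⟩

end Recog

open Recog in
/-- A morphism that is not injective on `𝒜^ℤ` factors as `σ = σ' ∘ τ` through a
strictly smaller alphabet, with `⦀σ'⦀ < ⦀σ⦀`; moreover, if `σ` is not injective on `𝒜^ℕ`,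
then `σ'` can be chosen so that each `σ'(c)` is a prefix of some `σ(b)`. -/
theorem stmt14 {A B : Type*} [Fintype A] [Fintype B]
    (σ : A → List B) (hσ : NonErasing σ) (hnotinj : ¬ InjZ σ) :
    ∃ (m : ℕ) (τ : A → List (Fin m)) (σ' : Fin m → List B),
      NonErasing τ ∧ NonErasing σ' ∧ m < Fintype.card A ∧
      totalLen σ' < totalLen σ ∧ (∀ a : A, comp σ' τ a = σ a) ∧
      (¬ InjN σ → ∀ c : Fin m, ∃ b : A, σ' c <+: σ b) := by
  classical
  by_cases hInjN : InjN σ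
  · -- the difference must be on the negative side; pass to the reversed morphism
    simp only [InjZ, not_forall] at hnotinj
    obtain ⟨x, x', y, hx, hx', hne⟩ := hnotinj
    have hcutn : ∀ (w : ℤ → A) (ℓ : ℕ), cut σ w ℓ = (cutN σ (fun n : ℕ => w n) ℓ : ℤ) := by
      intro w ℓ
      rw [cut, if_pos (by exact_mod_cast Int.ofNat_nonneg ℓ)]
      rw [Int.toNat_natCast]
      push_cast [cutN]
      rfl
    have hrestr : ∀ (w : ℤ → A), IsSubstPt σ w y →
        IsSubstPtN σ (fun n : ℕ => w n) (fun n : ℕ => y n) := by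
      intro w hw ℓ j hj
      have h := hw ℓ j hj
      rw [hcutn w ℓ] at h
      have hcast : ((cutN σ (fun n : ℕ => w n) ℓ : ℤ) + (j : ℤ))
          = (((cutN σ (fun n : ℕ => w n) ℓ + j : ℕ)) : ℤ) := by push_cast; ring
      rw [hcast] at h
      exact h
    have heqN := hInjN _ _ _ (hrestr x hx) (hrestr x' hx')
    have hpos : ∀ n : ℤ, 0 ≤ n → x n = x' n := by
      intro n hn
      have := congrFun heqN n.toNat
      simpa [Int.toNat_of_nonneg hn] using this
    obtain ⟨i, hi⟩ : ∃ i : ℤ, x i ≠ x' i := by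
      by_contra hc
      push_neg at hc
      exact hne (funext hc)
    have hineg : i < 0 := by
      by_contra h
      push_neg at h
      exact hi (hpos i h)
    set σr : A → List B := fun a => (σ a).reverse with hσr
    set yr : ℕ → B := fun n => y (-(n:ℤ) - 1) with hyr
    have key : ∀ w : ℤ → A, IsSubstPt σ w y →
        IsSubstPtN σr (fun n : ℕ => w (-(n:ℤ) - 1)) yr := by
      intro w hw ℓ j hj
      set wr : ℕ → A := fun n : ℕ => w (-(n:ℤ) - 1) with hwr
      set Lk := (σ (w (-(ℓ:ℤ) - 1))).length with hLk
      have hj' : j < Lk := by simpa [hσr, hwr] using hj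
      have hcutneg : cut σ w (-(ℓ:ℤ) - 1) = -(cutN σr wr (ℓ+1) : ℤ) := by
        rw [cut, if_neg (by omega)]
        have htn : (-(-(ℓ:ℤ) - 1)).toNat = ℓ + 1 := by omega
        rw [htn]
        congr 1
        push_cast [cutN]
        apply Finset.sum_congr rfl
        intro i _
        simp [hσr, hwr]
      have hsucc : cutN σr wr (ℓ+1) = cutN σr wr ℓ + Lk := by
        rw [cutN_succ]
        simp [hσr, hwr, hLk]
      have h := hw (-(ℓ:ℤ) - 1) (Lk - 1 - j) (by omega)
      have hidx : cut σ w (-(ℓ:ℤ) - 1) + ((Lk - 1 - j : ℕ) : ℤ)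
          = -(((cutN σr wr ℓ + j : ℕ)) : ℤ) - 1 := by
        rw [hcutneg, hsucc]
        push_cast
        omega
      rw [hidx] at h
      have hgoal : yr (cutN σr wr ℓ + j) = (σ (w (-(ℓ:ℤ) - 1))).get
          ⟨Lk - 1 - j, by omega⟩ := h
      rw [hgoal]
      simp only [hσr, hwr, hLk, List.get_eq_getElem, List.getElem_reverse]
    have hxrN := key x hx
    have hxr'N := key x' hx'
    have hrne : (fun n : ℕ => x (-(n:ℤ) - 1)) ≠ (fun n : ℕ => x' (-(n:ℤ) - 1)) := by
      intro hc
      apply hi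
      have hthis := congrFun hc (-1 - i).toNat
      rw [show -(((-1 - i).toNat : ℤ)) - 1 = i by omega] at hthis
      exact hthis
    have hInjr : ¬ InjN σr := by
      intro hI
      exact hrne (hI _ _ yr hxrN hxr'N)
    have hσrne : NonErasing σr := by
      intro a
      simp only [hσr, ne_eq, List.reverse_eq_nil_iff]
      exact hσ a
    obtain ⟨m, τr, σr', h1, h2, h3, h4, h5, h6⟩ :=
      core (totalLen σr) σr le_rfl hσrne hInjr
    have htleq : totalLen σr = totalLen σ := by
      apply Finset.sum_congr rfl
      intro a _
      simp [hσr]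
    refine ⟨m, fun a => (τr a).reverse, fun c => (σr' c).reverse, ?_, ?_, h3, ?_, ?_,
      fun h => absurd hInjN h⟩
    · intro a
      simp only [ne_eq, List.reverse_eq_nil_iff]
      exact h1 a
    · intro c
      simp only [ne_eq, List.reverse_eq_nil_iff]
      exact h2 c
    · have e2 : totalLen (fun c : Fin m => (σr' c).reverse) = totalLen σr' := by
        apply Finset.sum_congr rfl
        intro c _
        simp
      omega
    · intro a
      have h5a := h5 a
      rw [comp] at h5a ⊢
      rw [(wordApply_reverse σr' (τr a)).symm.trans (congrArg List.reverse h5a)]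
      simp [hσr]
  · obtain ⟨m, τ, σ', h1, h2, h3, h4, h5, h6⟩ :=
      core (totalLen σ) σ le_rfl hσ hInjN
    exact ⟨m, τ, σ', h1, h2, h3, h4, h5, fun _ => h6⟩
end

section
/- Let σ: 𝒜 → ℬ⁺ be a non-erasing morphism between finite alphabets. If the rank of the incidence matrix M_σ equals |𝒜|, or if |𝒜| = 2 and the image σ(𝒜^ℤ) contains at least two points, then σ is injective on 𝒜^ℤ. -/
open scoped BigOperators

namespace S15
open Recog List

variable {A B : Type*}

theorem cutN_zero (σ : A → List B) (x : ℕ → A) : cutN σ x 0 = 0 := rfl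

theorem cutN_succ (σ : A → List B) (x : ℕ → A) (n : ℕ) :
    cutN σ x (n + 1) = cutN σ x n + (σ (x n)).length :=
  Finset.sum_range_succ _ _

theorem cutN_add (σ : A → List B) (x : ℕ → A) (p k : ℕ) :
    cutN σ x (p + k) = cutN σ x p + ∑ i ∈ Finset.range k, (σ (x (p + i))).length := by
  induction k with
  | zero => simp
  | succ k ih =>
      rw [show p + (k + 1) = (p + k) + 1 from rfl, cutN_succ, ih, Finset.sum_range_succ]
      omega

theorem cutN_mono (σ : A → List B) (x : ℕ → A) : Monotone (cutN σ x) :=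
  monotone_nat_of_le_succ fun n => by rw [cutN_succ]; omega

theorem self_le_cutN {σ : A → List B} (hσ : NonErasing σ) (x : ℕ → A) (n : ℕ) :
    n ≤ cutN σ x n := by
  induction n with
  | zero => omega
  | succ n ih =>
      have := List.length_pos_iff.2 (hσ (x n))
      rw [cutN_succ]; omega

theorem exists_blockN {σ : A → List B} (hσ : NonErasing σ) (x : ℕ → A) (m : ℕ) :
    ∃ n, cutN σ x n ≤ m ∧ m < cutN σ x (n + 1) := by
  have hne : m ∈ {n | m < cutN σ x (n + 1)} := by
    have := self_le_cutN hσ x (m + 1); simpa using this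
  refine ⟨sInf {n | m < cutN σ x (n + 1)}, ?_, Nat.sInf_mem ⟨m, hne⟩⟩
  rcases Nat.eq_zero_or_pos (sInf {n | m < cutN σ x (n + 1)}) with h0 | hpos
  · rw [h0, cutN_zero]; omega
  · obtain ⟨k, hk⟩ := Nat.exists_eq_succ_of_ne_zero (Nat.pos_iff_ne_zero.1 hpos)
    have : k ∉ {n | m < cutN σ x (n + 1)} := Nat.notMem_of_lt_sInf (by omega)
    simp only [Set.mem_setOf_eq, not_lt] at this
    rw [hk]; exact this

theorem length_wordApply (τ : A → List B) (d : A) : ∀ w : List A,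
    (wordApply τ w).length = ∑ i ∈ Finset.range w.length, (τ (w.getD i d)).length := by
  intro w
  induction w with
  | nil => simp [wordApply]
  | cons c w ih =>
      rw [wordApply, List.length_append, List.length_cons, Finset.sum_range_succ']
      simp only [List.getD_cons_succ, List.getD_cons_zero]
      rw [ih]; omega

theorem getElem?_wordApply (τ : A → List B) (d : A) : ∀ (w : List A) (i : ℕ)
    (hi : i < w.length) (j : ℕ) (_hj : j < (τ (w[i]'hi)).length),
    (wordApply τ w)[(∑ i' ∈ Finset.range i, (τ (w.getD i' d)).length) + j]?
      = (τ (w[i]'hi))[j]? := by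
  intro w
  induction w with
  | nil => intro i hi; simp at hi
  | cons c w ih =>
      intro i hi j hj
      cases i with
      | zero =>
          simp only [Finset.range_zero, Finset.sum_empty, Nat.zero_add, List.getElem_cons_zero]
          rw [wordApply, List.getElem?_append_left (by simpa using hj)]
      | succ i =>
          rw [Finset.sum_range_succ']
          simp only [List.getD_cons_succ, List.getD_cons_zero, List.getElem_cons_succ] at *
          rw [wordApply, show (∑ i' ∈ Finset.range i, (τ (w.getD i' d)).length)
                + (τ c).length + j
              = (τ c).length + ((∑ i' ∈ Finset.range i, (τ (w.getD i' d)).length) + j) by omega,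
            List.getElem?_append_right (by omega)]
          rw [Nat.add_sub_cancel_left]
          exact ih i (by simp only [List.length_cons] at hi; omega) j hj

/-- index of the block of `infC ρ ξ` containing position `m`. -/
noncomputable def bIdx (ρ : A → List A) (ξ : ℕ → A) (m : ℕ) : ℕ :=
  sInf {n | m < cutN ρ ξ (n + 1)}

/-- the infinite concatenation `ρ(ξ₀)ρ(ξ₁)⋯`. -/
noncomputable def infC (ρ : A → List A) (ξ : ℕ → A) (m : ℕ) : A :=
  (ρ (ξ (bIdx ρ ξ m))).getD (m - cutN ρ ξ (bIdx ρ ξ m)) (ξ (bIdx ρ ξ m))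

theorem bIdx_eq {ρ : A → List A} {ξ : ℕ → A} {n j : ℕ} (hj : j < (ρ (ξ n)).length) :
    bIdx ρ ξ (cutN ρ ξ n + j) = n := by
  have hmem : n ∈ {k | cutN ρ ξ n + j < cutN ρ ξ (k + 1)} := by
    simp only [Set.mem_setOf_eq, cutN_succ]; omega
  refine le_antisymm (Nat.sInf_le hmem) ?_
  refine le_csInf ⟨n, hmem⟩ ?_
  intro k hk
  by_contra hlt
  push_neg at hlt
  have : cutN ρ ξ (k + 1) ≤ cutN ρ ξ n := cutN_mono ρ ξ (by omega)
  simp only [Set.mem_setOf_eq] at hk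
  omega

theorem infC_spec (ρ : A → List A) (ξ : ℕ → A) : IsSubstPtN ρ ξ (infC ρ ξ) := by
  intro n j hj
  unfold infC
  rw [bIdx_eq hj, Nat.add_sub_cancel_left, List.getD_eq_getElem?_getD,
    List.getElem?_eq_getElem hj]
  rfl

theorem cutN_comp {τ : A → List B} {ρ : A → List A} {ξ Ξ : ℕ → A}
    (hΞ : IsSubstPtN ρ ξ Ξ) (n : ℕ) :
    cutN (comp τ ρ) ξ n = cutN τ Ξ (cutN ρ ξ n) := by
  induction n with
  | zero => rfl
  | succ n ih =>
      rw [cutN_succ, ih, cutN_succ ρ, cutN_add]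
      congr 1
      rw [show comp τ ρ (ξ n) = wordApply τ (ρ (ξ n)) from rfl,
        length_wordApply τ (ξ n)]
      refine Finset.sum_congr rfl fun i hi => ?_
      have hi' := Finset.mem_range.1 hi
      rw [hΞ n i hi']
      congr 1
      rw [List.getD_eq_getElem?_getD, List.getElem?_eq_getElem hi', List.get_eq_getElem]
      rfl

theorem isSubstPtN_comp {τ : A → List B} {ρ : A → List A} {ξ : ℕ → A} {z : ℕ → B} {Ξ : ℕ → A}
    (hρ : NonErasing ρ) (hΞ : IsSubstPtN ρ ξ Ξ) (hz : IsSubstPtN (comp τ ρ) ξ z) :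
    IsSubstPtN τ Ξ z := by
  intro L j hj
  obtain ⟨n, hn1, hn2⟩ := exists_blockN hρ ξ L
  rw [cutN_succ] at hn2
  have hiL : L - cutN ρ ξ n < (ρ (ξ n)).length := by omega
  set i := L - cutN ρ ξ n with hidef
  have hL : L = cutN ρ ξ n + i := by omega
  have hgg : (ρ (ξ n)).get ⟨i, hiL⟩ = (ρ (ξ n))[i]'hiL := List.get_eq_getElem
  have hΞL : Ξ L = (ρ (ξ n))[i]'hiL := by rw [hL, hΞ n i hiL]; exact hgg
  set pre := ∑ i' ∈ Finset.range i, (τ ((ρ (ξ n)).getD i' (ξ n))).length with hpre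
  have hcutL : cutN τ Ξ L = cutN (comp τ ρ) ξ n + pre := by
    rw [hL, cutN_add, cutN_comp hΞ]
    congr 1
    refine Finset.sum_congr rfl fun i' hi' => ?_
    have hi'2 := Finset.mem_range.1 hi'
    rw [hΞ n i' (by omega)]
    congr 1
    rw [List.getD_eq_getElem?_getD, List.getElem?_eq_getElem (by omega : i' < _),
      List.get_eq_getElem]
    rfl
  have hj' : j < (τ ((ρ (ξ n))[i]'hiL)).length := by rw [← hΞL]; exact hj
  have hterm : (τ ((ρ (ξ n)).getD i (ξ n))).length = (τ ((ρ (ξ n))[i]'hiL)).length := by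
    rw [List.getD_eq_getElem?_getD, List.getElem?_eq_getElem hiL]; rfl
  have hjlen : pre + j < (comp τ ρ (ξ n)).length := by
    rw [show comp τ ρ (ξ n) = wordApply τ (ρ (ξ n)) from rfl, length_wordApply τ (ξ n)]
    have h1 : pre + (τ ((ρ (ξ n)).getD i (ξ n))).length
        = ∑ i' ∈ Finset.range (i + 1), (τ ((ρ (ξ n)).getD i' (ξ n))).length :=
      (Finset.sum_range_succ _ _).symm
    have h2 : ∑ i' ∈ Finset.range (i + 1), (τ ((ρ (ξ n)).getD i' (ξ n))).length
        ≤ ∑ i' ∈ Finset.range (ρ (ξ n)).length, (τ ((ρ (ξ n)).getD i' (ξ n))).length :=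
      Finset.sum_le_sum_of_subset (Finset.range_subset_range.2 (by omega))
    omega
  have key := hz n (pre + j) hjlen
  have hopt := getElem?_wordApply τ (ξ n) (ρ (ξ n)) i hiL j hj'
  rw [List.getElem?_eq_getElem hj'] at hopt
  have hjlen' : pre + j < (wordApply τ (ρ (ξ n))).length := hjlen
  rw [List.getElem?_eq_getElem hjlen'] at hopt
  have hgets : (comp τ ρ (ξ n)).get ⟨pre + j, hjlen⟩ = (τ ((ρ (ξ n))[i]'hiL))[j]'hj' := by
    rw [List.get_eq_getElem]
    exact Option.some.inj hopt
  rw [hcutL, Nat.add_assoc, key, hgets, List.get_eq_getElem]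
  congr 1
  rw [hΞL]

section Decode

variable [DecidableEq A]

/-- the elementary morphism `b ↦ ab`, `c ↦ c`. -/
def rho (a b : A) : A → List A := fun c => if c = b then [a, b] else [c]

theorem rho_nonerasing (a b : A) : NonErasing (rho a b) := by
  intro c; unfold rho; split <;> simp

theorem rho_len_pos (a b c : A) : 0 < (rho a b c).length := by
  unfold rho; split <;> simp

omit [DecidableEq A] in
theorem substPtN_getElem? {σ : A → List B} {x : ℕ → A} {z : ℕ → B}
    (h : IsSubstPtN σ x z) (n j : ℕ) (hj : j < (σ (x n)).length) :
    (σ (x n))[j]? = some (z (cutN σ x n + j)) := by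
  rw [List.getElem?_eq_getElem hj, h n j hj, List.get_eq_getElem]

theorem rho_head {a b : A} (hab : a ≠ b) {η Ξ : ℕ → A}
    (hΞ : IsSubstPtN (rho a b) η Ξ) (n : ℕ) :
    Ξ (cutN (rho a b) η n) ≠ b := by
  have h0 := substPtN_getElem? hΞ n 0 (rho_len_pos a b (η n))
  rw [Nat.add_zero] at h0
  by_cases hc : η n = b
  · have hr : rho a b (η n) = [a, b] := by simp [rho, hc]
    rw [hr] at h0
    simp only [List.getElem?_cons_zero] at h0
    intro hbad; exact hab ((Option.some.inj h0).trans hbad)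
  · have hr : rho a b (η n) = [η n] := by simp [rho, hc]
    rw [hr] at h0
    simp only [List.getElem?_cons_zero] at h0
    intro hbad; exact hc ((Option.some.inj h0).trans hbad)

theorem rho_detect {a b : A} (hab : a ≠ b) {η Ξ : ℕ → A}
    (hΞ : IsSubstPtN (rho a b) η Ξ) (n : ℕ) :
    η n = b ↔ Ξ (cutN (rho a b) η n + 1) = b := by
  constructor
  · intro hc
    have hr : rho a b (η n) = [a, b] := by simp [rho, hc]
    have h1 := substPtN_getElem? hΞ n 1 (by rw [hr]; simp)
    rw [hr] at h1
    simp only [List.getElem?_cons_succ, List.getElem?_cons_zero] at h1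
    exact (Option.some.inj h1).symm
  · intro h1
    by_contra hc
    have hlen : (rho a b (η n)).length = 1 := by simp [rho, hc]
    have hcs : cutN (rho a b) η (n + 1) = cutN (rho a b) η n + 1 := by
      rw [cutN_succ, hlen]
    exact rho_head hab hΞ (n + 1) (hcs ▸ h1)

theorem rho_get0 {a b : A} {η Ξ : ℕ → A}
    (hΞ : IsSubstPtN (rho a b) η Ξ) (n : ℕ) (hc : η n ≠ b) :
    Ξ (cutN (rho a b) η n) = η n := by
  have hr : rho a b (η n) = [η n] := by simp [rho, hc]
  have h0 := substPtN_getElem? hΞ n 0 (rho_len_pos a b (η n))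
  rw [Nat.add_zero, hr] at h0
  simp only [List.getElem?_cons_zero] at h0
  exact (Option.some.inj h0).symm

theorem rho_inj {a b : A} (hab : a ≠ b) {ξ ξ' Ξ : ℕ → A}
    (hΞ : IsSubstPtN (rho a b) ξ Ξ) (hΞ' : IsSubstPtN (rho a b) ξ' Ξ) :
    ξ = ξ' := by
  funext n
  induction n using Nat.strong_induction_on with
  | _ n ih =>
    have hcut : cutN (rho a b) ξ n = cutN (rho a b) ξ' n :=
      Finset.sum_congr rfl fun m hm => by rw [ih m (Finset.mem_range.1 hm)]
    by_cases hb : ξ n = b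
    · have h1 := (rho_detect hab hΞ n).1 hb
      rw [hcut] at h1
      rw [hb, (rho_detect hab hΞ' n).2 h1]
    · have hb' : ξ' n ≠ b := by
        intro hb'
        have h1 := (rho_detect hab hΞ' n).1 hb'
        rw [← hcut] at h1
        exact hb ((rho_detect hab hΞ n).2 h1)
      rw [← rho_get0 hΞ n hb, hcut, rho_get0 hΞ' n hb']

end Decode

/-- Defect-style conclusion: all images are products over a set of fewer than `|A|` words. -/
def Concl [Fintype A] [DecidableEq B] (σ : A → List B) : Prop :=
  ∃ S : Finset (List B), ([] ∉ S) ∧ S.card + 1 ≤ Fintype.card A ∧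
    ∀ a, ∃ l : List (List B), (∀ w ∈ l, w ∈ S) ∧ σ a = l.flatten

theorem concl_of_eq [Fintype A] [DecidableEq B] {σ : A → List B} (hσ : NonErasing σ)
    {a b : A} (hab : a ≠ b) (heq : σ a = σ b) : Concl σ := by
  classical
  refine ⟨(Finset.univ.erase a).image σ, ?_, ?_, ?_⟩
  · intro hmem
    obtain ⟨c, _, hc⟩ := Finset.mem_image.1 hmem
    exact hσ c hc
  · have h1 : ((Finset.univ.erase a).image σ).card ≤ (Finset.univ.erase a).card :=
      Finset.card_image_le
    have h2 : (Finset.univ.erase a).card = Fintype.card A - 1 := by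
      rw [Finset.card_erase_of_mem (Finset.mem_univ a), Finset.card_univ]
    have h3 : 0 < Fintype.card A := Fintype.card_pos_iff.2 ⟨a⟩
    omega
  · intro c
    refine ⟨[σ c], fun w hw => ?_, by simp⟩
    rw [List.mem_singleton] at hw
    subst hw
    by_cases hc : c = a
    · subst hc
      exact Finset.mem_image.2 ⟨b, Finset.mem_erase.2 ⟨hab.symm, Finset.mem_univ b⟩, heq.symm⟩
    · exact Finset.mem_image.2 ⟨c, Finset.mem_erase.2 ⟨hc, Finset.mem_univ c⟩, rfl⟩

theorem osd [Fintype A] [DecidableEq B] :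
    ∀ (t : ℕ) (σ : A → List B), totalLen σ ≤ t → NonErasing σ →
    (∃ (ξ ξ' : ℕ → A) (z : ℕ → B), ξ ≠ ξ' ∧ IsSubstPtN σ ξ z ∧ IsSubstPtN σ ξ' z) →
    Concl σ := by
  letI : DecidableEq A := Classical.decEq A
  intro t
  induction t with
  | zero =>
      rintro σ ht hσ ⟨ξ, ξ', z, hne, h1, h2⟩
      exfalso
      have h : (σ (ξ 0)).length ≤ ∑ a, (σ a).length := Finset.single_le_sum
        (f := fun a => (σ a).length) (fun i _ => Nat.zero_le _) (Finset.mem_univ (ξ 0))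
      have hp := List.length_pos_iff.2 (hσ (ξ 0))
      unfold totalLen at ht
      omega
  | succ t ih =>
      rintro σ ht hσ ⟨ξ, ξ', z, hne, h1, h2⟩
      have hex : ∃ n, ξ n ≠ ξ' n := Function.ne_iff.1 hne
      have key : ∀ (ξ ξ' : ℕ → A), IsSubstPtN σ ξ z → IsSubstPtN σ ξ' z →
          ∀ n₀, (∀ m, m < n₀ → ξ m = ξ' m) → ξ n₀ ≠ ξ' n₀ →
          (σ (ξ n₀)).length < (σ (ξ' n₀)).length → Concl σ := by
        clear hne h1 h2 hex ξ ξ'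
        intro ξ ξ' h1 h2 n₀ hmin hd hlen
        set a := ξ n₀ with ha
        set b := ξ' n₀ with hb
        have hcut : cutN σ ξ n₀ = cutN σ ξ' n₀ :=
          Finset.sum_congr rfl fun m hm => by rw [hmin m (Finset.mem_range.1 hm)]
        have hpref : ∀ j (hj : j < (σ a).length),
            (σ a)[j]'hj = (σ b)[j]'(lt_trans hj hlen) := by
          intro j hj
          have e1 := h1 n₀ j hj
          have e2 := h2 n₀ j (lt_trans hj hlen)
          rw [List.get_eq_getElem] at e1 e2
          rw [← e1, ← e2, hcut]
        set s := (σ b).drop (σ a).length with hs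
        have hslen : s.length = (σ b).length - (σ a).length := List.length_drop
        have hsne : s ≠ [] := List.ne_nil_of_length_pos (by omega)
        have htake : (σ b).take (σ a).length = σ a := by
          apply List.ext_getElem
          · rw [List.length_take]; omega
          · intro j hj1 hj2
            rw [List.getElem_take]
            exact (hpref j hj2).symm
        have hsb : σ b = σ a ++ s := by
          conv_lhs => rw [← List.take_append_drop (σ a).length (σ b)]
          rw [htake, hs]
        set τ := fun c => if c = b then s else σ c with hτ
        have hτa : ∀ c, c ≠ b → τ c = σ c := fun c hc => by simp [hτ, hc]
        have hτb : τ b = s := by simp [hτ]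
        have hτne : NonErasing τ := by
          intro c
          by_cases hc : c = b
          · rw [hc, hτb]; exact hsne
          · rw [hτa c hc]; exact hσ c
        have hcomp : comp τ (rho a b) = σ := by
          funext c
          by_cases hc : c = b
          · show wordApply τ (rho a b c) = σ c
            rw [show rho a b c = [a, b] by simp [rho, hc]]
            show τ a ++ (τ b ++ wordApply τ []) = σ c
            rw [show wordApply τ ([] : List A) = [] from rfl, List.append_nil,
              hτa a hd, hτb, hc, ← hsb]
          · show wordApply τ (rho a b c) = σ c
            rw [show rho a b c = [c] by simp [rho, hc]]
            show τ c ++ wordApply τ [] = σ c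
            rw [show wordApply τ ([] : List A) = [] from rfl, List.append_nil, hτa c hc]
        have hlt : totalLen τ ≤ t := by
          have hstrict : totalLen τ < totalLen σ := by
            apply Finset.sum_lt_sum
            · intro c _
              by_cases hc : c = b
              · rw [hc, hτb]
                have := List.length_pos_iff.2 (hσ a)
                rw [hslen]
                omega
              · rw [hτa c hc]
            · refine ⟨b, Finset.mem_univ b, ?_⟩
              rw [hτb]
              have := List.length_pos_iff.2 (hσ a)
              rw [hslen]
              omega
          omega
        have hΞ := infC_spec (rho a b) ξ
        have hΞ' := infC_spec (rho a b) ξ'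
        have hz1 : IsSubstPtN τ (infC (rho a b) ξ) z :=
          isSubstPtN_comp (rho_nonerasing a b) hΞ (by rw [hcomp]; exact h1)
        have hz2 : IsSubstPtN τ (infC (rho a b) ξ') z :=
          isSubstPtN_comp (rho_nonerasing a b) hΞ' (by rw [hcomp]; exact h2)
        have hΞne : infC (rho a b) ξ ≠ infC (rho a b) ξ' := by
          intro hEq
          have : ξ = ξ' := rho_inj hd (hEq ▸ hΞ) hΞ'
          exact hd (by rw [ha, hb, this])
        obtain ⟨S, hS1, hS2, hS3⟩ := ih τ hlt hτne ⟨_, _, z, hΞne, hz1, hz2⟩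
        refine ⟨S, hS1, hS2, fun c => ?_⟩
        by_cases hc : c = b
        · obtain ⟨la, hla, hja⟩ := hS3 a
          obtain ⟨lb, hlb, hjb⟩ := hS3 b
          refine ⟨la ++ lb, ?_, ?_⟩
          · intro w hw
            rcases List.mem_append.1 hw with h | h
            · exact hla w h
            · exact hlb w h
          · rw [List.flatten_append, ← hja, ← hjb, hτa a hd, hτb, hc, ← hsb]
        · obtain ⟨lc, hlc, hjc⟩ := hS3 c
          exact ⟨lc, hlc, by rw [← hτa c hc]; exact hjc⟩
      set n₀ := Nat.find hex with hn₀
      have hd : ξ n₀ ≠ ξ' n₀ := Nat.find_spec hex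
      have hmin : ∀ m, m < n₀ → ξ m = ξ' m := fun m hm => by
        have := Nat.find_min hex hm
        exact not_not.1 this
      rcases lt_trichotomy (σ (ξ n₀)).length (σ (ξ' n₀)).length with hl | hl | hl
      · exact key ξ ξ' h1 h2 n₀ hmin hd hl
      · -- equal lengths: equal words
        have hcut : cutN σ ξ n₀ = cutN σ ξ' n₀ :=
          Finset.sum_congr rfl fun m hm => by rw [hmin m (Finset.mem_range.1 hm)]
        have heq : σ (ξ n₀) = σ (ξ' n₀) := by
          apply List.ext_getElem hl
          intro j hj1 hj2
          have e1 := h1 n₀ j hj1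
          have e2 := h2 n₀ j hj2
          rw [List.get_eq_getElem] at e1 e2
          rw [← e1, ← e2, hcut]
        exact concl_of_eq hσ hd heq
      · exact key ξ' ξ h2 h1 n₀ (fun m hm => (hmin m hm).symm) (Ne.symm hd) hl

theorem cut_succ (σ : A → List B) (x : ℤ → A) (ℓ : ℤ) :
    cut σ x (ℓ + 1) = cut σ x ℓ + ((σ (x ℓ)).length : ℤ) := by
  rcases le_or_gt 0 ℓ with h | h
  · rw [cut, cut, if_pos h, if_pos (by omega : (0:ℤ) ≤ ℓ + 1)]
    rw [show (ℓ + 1).toNat = ℓ.toNat + 1 by omega, Finset.sum_range_succ]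
    have hh : ((ℓ.toNat : ℤ)) = ℓ := by omega
    rw [hh]
  · have hL : cut σ x (ℓ + 1)
        = -∑ i ∈ Finset.range (-(ℓ+1)).toNat, ((σ (x (-(i:ℤ) - 1))).length : ℤ) := by
      rw [cut]
      split
      · rw [show (ℓ + 1).toNat = 0 by omega, show (-(ℓ+1)).toNat = 0 by omega]
        simp
      · rfl
    rw [hL, cut, if_neg (by omega)]
    rw [show (-ℓ).toNat = (-(ℓ+1)).toNat + 1 by omega, Finset.sum_range_succ]
    rw [show (-(((-(ℓ+1)).toNat : ℕ) : ℤ) - 1) = ℓ by omega]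
    ring

theorem cut_cast (σ : A → List B) (x : ℤ → A) (n : ℕ) :
    cut σ x (n : ℤ) = ((cutN σ (fun m => x (m : ℤ)) n : ℕ) : ℤ) := by
  rw [cut, if_pos (by omega : (0:ℤ) ≤ (n:ℤ)), Int.toNat_natCast, cutN]
  push_cast
  rfl

theorem substPt_restrict {σ : A → List B} {x : ℤ → A} {y : ℤ → B}
    (h : IsSubstPt σ x y) :
    IsSubstPtN σ (fun n => x (n : ℤ)) (fun n => y (n : ℤ)) := by
  intro n j hj
  have key := h (n : ℤ) j hj
  have harg : ((cutN σ (fun m => x (m : ℤ)) n + j : ℕ) : ℤ) = cut σ x (n : ℤ) + (j : ℤ) := by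
    rw [cut_cast]; push_cast; ring
  show y ((cutN σ (fun m => x (m : ℤ)) n + j : ℕ) : ℤ) = _
  rw [harg]
  exact key

/-- the letterwise reverse of a morphism. -/
def mir (σ : A → List B) : A → List B := fun a => (σ a).reverse

theorem mir_nonerasing {σ : A → List B} (hσ : NonErasing σ) : NonErasing (mir σ) := by
  intro a
  simp only [mir, ne_eq, List.reverse_eq_nil_iff]
  exact hσ a

theorem cutN_mir (σ : A → List B) (x : ℤ → A) (n : ℕ) :
    ((cutN (mir σ) (fun m => x (-1 - (m:ℤ))) n : ℕ) : ℤ) = - cut σ x (-(n:ℤ)) := by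
  by_cases h : n = 0
  · subst h; simp [cutN, cut]
  · rw [cut, if_neg (by omega)]
    simp only [neg_neg, Int.toNat_natCast]
    rw [cutN]
    push_cast
    refine Finset.sum_congr rfl fun i _ => ?_
    have harg : (-1 - (i:ℤ)) = (-(i:ℤ) - 1) := by ring
    simp [mir, harg]

theorem substPt_mirror {σ : A → List B} {x : ℤ → A} {y : ℤ → B}
    (h : IsSubstPt σ x y) :
    IsSubstPtN (mir σ) (fun n => x (-1 - (n:ℤ))) (fun n => y (-1 - (n:ℤ))) := by
  intro n j hj
  have hj0 : j < (σ (x (-1 - (n:ℤ)))).length := by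
    simpa [mir] using hj
  set L := (σ (x (-1 - (n:ℤ)))).length with hLdef
  have hj' : L - 1 - j < L := by omega
  have key := h (-1 - (n:ℤ)) (L - 1 - j) hj'
  have harg : (-1 - ((cutN (mir σ) (fun m => x (-1 - (m:ℤ))) n + j : ℕ) : ℤ))
      = cut σ x (-1 - (n:ℤ)) + ((L - 1 - j : ℕ) : ℤ) := by
    have h1 := cutN_mir σ x n
    have h2 := cut_succ σ x (-1 - (n:ℤ))
    rw [show (-1 - (n:ℤ)) + 1 = -(n:ℤ) by ring] at h2
    omega
  show y (-1 - ((cutN (mir σ) (fun m => x (-1 - (m:ℤ))) n + j : ℕ) : ℤ)) = _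
  rw [harg, key, List.get_eq_getElem, List.get_eq_getElem]
  show (σ (x (-1 - (n:ℤ))))[L - 1 - j]'hj'
      = ((σ (x (-1 - (n:ℤ)))).reverse)[j]'(by simpa [mir] using hj)
  rw [List.getElem_reverse]

theorem concl_mir [Fintype A] [DecidableEq B] {σ : A → List B}
    (h : Concl (mir σ)) : Concl σ := by
  obtain ⟨S, hS1, hS2, hS3⟩ := h
  refine ⟨S.image List.reverse, ?_, ?_, ?_⟩
  · intro hmem
    obtain ⟨w, hw, hwe⟩ := Finset.mem_image.1 hmem
    rw [List.reverse_eq_nil_iff] at hwe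
    exact hS1 (hwe ▸ hw)
  · have := Finset.card_image_le (s := S) (f := List.reverse)
    omega
  · intro a
    obtain ⟨l, hl, he⟩ := hS3 a
    refine ⟨(l.map List.reverse).reverse, ?_, ?_⟩
    · intro w hw
      rw [List.mem_reverse, List.mem_map] at hw
      obtain ⟨v, hv, rfl⟩ := hw
      exact Finset.mem_image.2 ⟨v, hl v hv, rfl⟩
    · have h0 : σ a = (mir σ a).reverse := by simp [mir]
      rw [h0, he, List.reverse_flatten]

theorem concl_of_not_injZ [Fintype A] [DecidableEq B] {σ : A → List B} (hσ : NonErasing σ)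
    (h : ¬ InjZ σ) : Concl σ := by
  rw [InjZ] at h
  push_neg at h
  obtain ⟨x, x', y, hx, hx', hne⟩ := h
  by_cases hpos : ∀ n : ℕ, x (n:ℤ) = x' (n:ℤ)
  · apply concl_mir
    apply osd (totalLen (mir σ)) (mir σ) le_rfl (mir_nonerasing hσ)
    refine ⟨_, _, _, ?_, substPt_mirror hx, substPt_mirror hx'⟩
    intro hEq
    apply hne
    funext m
    rcases le_or_gt 0 m with hm | hm
    · have := hpos m.toNat
      rwa [Int.toNat_of_nonneg hm] at this
    · have := congrFun hEq (-1 - m).toNat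
      rwa [show (-1 - (((-1 - m).toNat : ℕ) : ℤ)) = m by omega] at this
  · push_neg at hpos
    obtain ⟨n, hn⟩ := hpos
    apply osd (totalLen σ) σ le_rfl hσ
    exact ⟨_, _, _, fun hEq => hn (congrFun hEq n), substPt_restrict hx, substPt_restrict hx'⟩

theorem rank_lt_of_concl [Fintype A] [Fintype B] [DecidableEq B] {σ : A → List B}
    (h : Concl σ) : (incidence σ).rank < Fintype.card A := by
  classical
  obtain ⟨S, hS1, hS2, hS3⟩ := h
  set π : List B → (B → ℚ) := fun w b => ((w.count b : ℕ) : ℚ) with hπ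
  have hπapp : ∀ u v : List B, π (u ++ v) = π u + π v := by
    intro u v; funext b; simp [hπ, List.count_append]
  have hπflat : ∀ (l : List (List B)), (∀ w ∈ l, w ∈ S) →
      π l.flatten ∈ Submodule.span ℚ (↑(S.image π) : Set (B → ℚ)) := by
    intro l
    induction l with
    | nil =>
        intro _
        have h0 : π [] = 0 := by funext b; simp [hπ]
        rw [List.flatten_nil, h0]
        exact Submodule.zero_mem _
    | cons w l ih =>
        intro hmem
        rw [List.flatten_cons, hπapp]
        refine Submodule.add_mem _ ?_ (ih fun v hv => hmem v (by simp [hv]))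
        exact Submodule.subset_span
          (Finset.mem_coe.2 (Finset.mem_image.2 ⟨w, hmem w (by simp), rfl⟩))
  have hrange : LinearMap.range (incidence σ).mulVecLin
      ≤ Submodule.span ℚ (↑(S.image π) : Set (B → ℚ)) := by
    rw [Matrix.range_mulVecLin, Submodule.span_le]
    rintro v ⟨a, rfl⟩
    have hcol : (incidence σ).col a = π (σ a) := by
      funext b; rfl
    rw [hcol]
    obtain ⟨l, hl, he⟩ := hS3 a
    rw [he]
    exact hπflat l hl
  have h1 : (incidence σ).rank ≤ (S.image π).card := by
    refine le_trans (Submodule.finrank_mono hrange) ?_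
    exact finrank_span_finset_le_card (S.image π)
  have h2 : (S.image π).card ≤ S.card := Finset.card_image_le
  omega

theorem cut_zero (σ : A → List B) (x : ℤ → A) : cut σ x 0 = 0 := by simp [cut]

theorem self_le_cut_nonneg {σ : A → List B} (hσ : NonErasing σ) (x : ℤ → A) (n : ℕ) :
    (n : ℤ) ≤ cut σ x (n : ℤ) := by
  induction n with
  | zero => rw [Nat.cast_zero, cut_zero]
  | succ n ih =>
      have hs := cut_succ σ x (n : ℤ)
      have hp := List.length_pos_iff.2 (hσ (x (n : ℤ)))
      push_cast
      push_cast at ih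
      omega

theorem cut_le_self_nonpos {σ : A → List B} (hσ : NonErasing σ) (x : ℤ → A) (n : ℕ) :
    cut σ x (-(n : ℤ)) ≤ -(n : ℤ) := by
  induction n with
  | zero => simp [cut_zero]
  | succ n ih =>
      have hs := cut_succ σ x (-(n : ℤ) - 1)
      rw [show (-(n:ℤ) - 1) + 1 = -(n:ℤ) by ring] at hs
      have hp := List.length_pos_iff.2 (hσ (x (-(n : ℤ) - 1)))
      have : (-((n+1:ℕ) : ℤ)) = -(n:ℤ) - 1 := by push_cast; ring
      rw [this]
      omega

theorem exists_blockZ {σ : A → List B} (hσ : NonErasing σ) (x : ℤ → A) (m : ℤ) :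
    ∃ ℓ : ℤ, cut σ x ℓ ≤ m ∧ m < cut σ x (ℓ + 1) := by
  set base : ℤ := -(((-m).toNat : ℕ) : ℤ) with hbase
  have hbm : base ≤ m := by omega
  have hcb : cut σ x base ≤ m := le_trans (cut_le_self_nonpos hσ x (-m).toNat) hbm
  set p : ℕ := (m + 1).toNat with hp
  have hcp : m < cut σ x (p : ℤ) := by
    rcases le_or_gt 0 m with hm | hm
    · have := self_le_cut_nonneg hσ x p
      omega
    · have : (p : ℤ) = 0 := by omega
      rw [this, cut_zero]
      omega
  have hTex : ∃ T : ℕ, m < cut σ x (base + (T : ℤ) + 1) := by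
    refine ⟨((p : ℤ) - base - 1).toNat, ?_⟩
    rw [show base + (((((p : ℤ) - base - 1).toNat : ℕ)) : ℤ) + 1 = (p : ℤ) by omega]
    exact hcp
  classical
  set T := Nat.find hTex with hT
  refine ⟨base + (T : ℤ), ?_, Nat.find_spec hTex⟩
  rcases Nat.eq_zero_or_pos T with h0 | hpos
  · rw [h0]; simpa using hcb
  · obtain ⟨u, hu⟩ := Nat.exists_eq_succ_of_ne_zero (Nat.pos_iff_ne_zero.1 hpos)
    have hnot := Nat.find_min hTex (m := u) (by omega)
    push_neg at hnot
    rw [show base + (T : ℤ) = base + (u : ℤ) + 1 by omega]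
    exact hnot

theorem flatten_rep_getElem? {z : List B} :
    ∀ (l : List (List B)), (∀ w ∈ l, w = z) → ∀ (j : ℕ), j < l.flatten.length →
    l.flatten[j]? = z[j % z.length]? := by
  intro l
  induction l with
  | nil => intro _ j hj; simp at hj
  | cons w l ih =>
      intro h j hj
      have hw : w = z := h w (by simp)
      subst hw
      rw [List.flatten_cons]
      by_cases hjz : j < w.length
      · rw [List.getElem?_append_left hjz, Nat.mod_eq_of_lt hjz]
      · push_neg at hjz
        rw [List.getElem?_append_right hjz, Nat.mod_eq_sub_mod hjz]
        refine ih (fun v hv => h v (by simp [hv])) _ ?_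
        rw [List.flatten_cons, List.length_append] at hj
        omega

theorem flatten_rep_len {z : List B} : ∀ (l : List (List B)), (∀ w ∈ l, w = z) →
    z.length ∣ l.flatten.length := by
  intro l
  induction l with
  | nil => simp
  | cons w l ih =>
      intro h
      have hw : w = z := h w (by simp)
      subst hw
      rw [List.flatten_cons, List.length_append]
      exact Nat.dvd_add dvd_rfl (ih fun v hv => h v (by simp [hv]))

theorem dvd_cut {σ : A → List B} {x : ℤ → A} {d : ℕ} (hd : ∀ a, d ∣ (σ a).length)
    (ℓ : ℤ) : (d : ℤ) ∣ cut σ x ℓ := by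
  rw [cut]
  split
  · exact Finset.dvd_sum fun i _ => Int.natCast_dvd_natCast.2 (hd _)
  · exact dvd_neg.2 (Finset.dvd_sum fun i _ => Int.natCast_dvd_natCast.2 (hd _))

theorem eq_periodic {σ : A → List B} (hσ : NonErasing σ) {z : List B}
    (hzpos : 0 < z.length)
    (hpow : ∀ a, ∃ l : List (List B), (∀ w ∈ l, w = z) ∧ σ a = l.flatten)
    {x : ℤ → A} {y : ℤ → B} (h : IsSubstPt σ x y) (n : ℤ) {k : ℕ} (hk : k < z.length)
    (hkeq : (n % ((z.length : ℕ) : ℤ)).toNat = k) : y n = z[k]'hk := by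
  have hdvd : ∀ a, z.length ∣ (σ a).length := by
    intro a
    obtain ⟨l, hl, he⟩ := hpow a
    rw [he]
    exact flatten_rep_len l hl
  obtain ⟨ℓ, hl1, hl2⟩ := exists_blockZ hσ x n
  rw [cut_succ] at hl2
  have hjlt : (n - cut σ x ℓ).toNat < (σ (x ℓ)).length := by omega
  set j := (n - cut σ x ℓ).toNat with hj
  have key := h ℓ j hjlt
  rw [show cut σ x ℓ + (j : ℤ) = n by omega] at key
  rw [key, List.get_eq_getElem]
  obtain ⟨l, hl, he⟩ := hpow (x ℓ)
  apply Option.some.inj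
  rw [← List.getElem?_eq_getElem, ← List.getElem?_eq_getElem]
  have h2 : (σ (x ℓ))[j]? = z[j % z.length]? := by
    rw [he]
    exact flatten_rep_getElem? l hl j (he ▸ hjlt)
  rw [h2]
  congr 1
  obtain ⟨q, hq⟩ := dvd_cut (x := x) hdvd ℓ
  have hmod : n % ((z.length : ℕ) : ℤ) = ((j % z.length : ℕ) : ℤ) := by
    rw [show n = (j : ℤ) + ((z.length : ℕ) : ℤ) * q by omega,
      Int.add_mul_emod_self_left]
    push_cast
    rfl
  omega

theorem image_unique {σ : A → List B} (hσ : NonErasing σ) {z : List B}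
    (hzpos : 0 < z.length)
    (hpow : ∀ a, ∃ l : List (List B), (∀ w ∈ l, w = z) ∧ σ a = l.flatten)
    {x x' : ℤ → A} {y y' : ℤ → B} (h : IsSubstPt σ x y) (h' : IsSubstPt σ x' y') :
    y = y' := by
  funext n
  have hb1 : 0 ≤ n % ((z.length : ℕ) : ℤ) := Int.emod_nonneg n (by omega)
  have hb2 : n % ((z.length : ℕ) : ℤ) < ((z.length : ℕ) : ℤ) :=
    Int.emod_lt_of_pos n (by omega)
  have hk : (n % ((z.length : ℕ) : ℤ)).toNat < z.length := by omega
  rw [eq_periodic hσ hzpos hpow h n hk rfl, eq_periodic hσ hzpos hpow h' n hk rfl]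

end S15

open Recog in
/-- If `rk M_σ = |𝒜|`, or `|𝒜| = 2` and `σ(𝒜^ℤ)` contains at least two points,
then `σ` is injective on `𝒜^ℤ`. -/
theorem stmt15 {A B : Type*} [Fintype A] [Fintype B] [DecidableEq B]
    (σ : A → List B) (hσ : NonErasing σ)
    (hcond : (incidence σ).rank = Fintype.card A ∨
      (Fintype.card A = 2 ∧ ∃ y y' : ℤ → B, y ≠ y' ∧
        (∃ x : ℤ → A, IsSubstPt σ x y) ∧ (∃ x' : ℤ → A, IsSubstPt σ x' y'))) :
    InjZ σ := by
  classical
  by_contra hInj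
  obtain ⟨S, hS1, hS2, hS3⟩ := S15.concl_of_not_injZ hσ hInj
  rcases hcond with hr | ⟨hA, y, y', hyy, ⟨x, hx⟩, ⟨x', hx'⟩⟩
  · have := S15.rank_lt_of_concl ⟨S, hS1, hS2, hS3⟩
    omega
  · have hcard : S.card ≤ 1 := by omega
    by_cases hS0 : S.card = 0
    · have hA2 : Nonempty A := by
        rw [← Fintype.card_pos_iff]
        omega
      obtain ⟨a⟩ := hA2
      obtain ⟨l, hl, he⟩ := hS3 a
      have hlnil : l = [] := by
        cases l with
        | nil => rfl
        | cons w l =>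
            exact absurd (hl w (by simp)) (by rw [Finset.card_eq_zero.1 hS0]; simp)
      rw [hlnil] at he
      exact hσ a (by simpa using he)
    · have hS1' : S.card = 1 := by omega
      obtain ⟨z, hz⟩ := Finset.card_eq_one.1 hS1'
      have hzne : z ≠ [] := fun h => hS1 (by rw [hz, h]; simp)
      have hzpos : 0 < z.length := List.length_pos_iff.2 hzne
      have hpow : ∀ a, ∃ l : List (List B), (∀ w ∈ l, w = z) ∧ σ a = l.flatten := by
        intro a
        obtain ⟨l, hl, he⟩ := hS3 a
        refine ⟨l, fun w hw => ?_, he⟩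
        have := hl w hw
        rwa [hz, Finset.mem_singleton] at this
      exact hyy (S15.image_unique hσ hzpos hpow hx hx')
end

section
/- Let σ: 𝒜 → ℬ⁺ be a non-erasing morphism between finite alphabets, and let (k,x), (k',x') be centered σ-representations of some y ∈ ℬ^ℤ. If T^ℓ(x) = T^{ℓ'}(x') and the ℓ-th σ-cutting point of (k,x) coincides with the ℓ'-th σ-cutting point of (k',x') for some ℓ, ℓ' ∈ ℤ, then (k,x) = (k',x'). -/
open scoped BigOperators

namespace Stmt16Aux
open Recog

lemma cut_succ {A B : Type*} (σ : A → List B) (x : ℤ → A) (n : ℤ) :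
    cut σ x (n + 1) = cut σ x n + ((σ (x n)).length : ℤ) := by
  unfold cut
  rcases le_or_gt 0 n with h | h
  · rw [if_pos h, if_pos (by omega)]
    have ht : (n + 1).toNat = n.toNat + 1 := by omega
    rw [ht, Finset.sum_range_succ, Int.toNat_of_nonneg h]
  · rcases eq_or_lt_of_le (by omega : n + 1 ≤ 0) with h1 | h1
    · rw [if_pos (le_of_eq h1.symm), if_neg (by omega)]
      have : (-n).toNat = 1 := by omega
      rw [this, h1]
      simp
      have : n = -1 := by omega
      rw [this]; norm_num
    · rw [if_neg (by omega), if_neg (by omega)]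
      have ht : (-n).toNat = (-(n+1)).toNat + 1 := by omega
      rw [ht, Finset.sum_range_succ]
      have he : (-(((-(n+1)).toNat : ℤ)) - 1) = n := by omega
      rw [he]; ring

lemma cut_ge {A B : Type*} (σ : A → List B) (x : ℤ → A) {d : ℤ} (hd : 1 ≤ d) :
    ((σ (x 0)).length : ℤ) ≤ cut σ x d := by
  rw [cut, if_pos (by omega)]
  have h0 : (0 : ℕ) ∈ Finset.range d.toNat := Finset.mem_range.mpr (by omega)
  have := Finset.single_le_sum (f := fun i : ℕ => ((σ (x i)).length : ℤ))
    (fun i _ => by positivity) h0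
  simpa using this

lemma cut_le {A B : Type*} (σ : A → List B) (x : ℤ → A) {d : ℤ} (hd : d ≤ -1) :
    cut σ x d ≤ -((σ (x d)).length : ℤ) := by
  rw [cut, if_neg (by omega)]
  have h0 : (-d).toNat - 1 ∈ Finset.range (-d).toNat := Finset.mem_range.mpr (by omega)
  have := Finset.single_le_sum (f := fun i : ℕ => ((σ (x (-(i : ℤ) - 1))).length : ℤ))
    (fun i _ => by positivity) h0
  have he : (-(((-d).toNat - 1 : ℕ) : ℤ) - 1) = d := by omega
  rw [he] at this
  omega

end Stmt16Aux

open Recog in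
/-- Two centered σ-representations of `y` whose sequences agree along a shift
and which share corresponding cutting points are equal. -/
theorem stmt16 {A B : Type*} [Fintype A] [Fintype B]
    (σ : A → List B) (hσ : NonErasing σ) (y : ℤ → B)
    (k k' : ℤ) (x x' : ℤ → A) (ℓ ℓ' : ℤ)
    (h1 : IsCenteredRep σ y k x) (h2 : IsCenteredRep σ y k' x')
    (hshift : (fun i => x (i + ℓ)) = fun i => x' (i + ℓ'))
    (hcut : cut σ x ℓ - k = cut σ x' ℓ' - k') :
    k = k' ∧ x = x' := by
  obtain ⟨hr1, hk1, hk1'⟩ := h1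
  obtain ⟨hr2, hk2, hk2'⟩ := h2
  set d := ℓ' - ℓ with hdd
  have hx : ∀ n : ℤ, x n = x' (n + d) := by
    intro n
    have h := congrFun hshift (n - ℓ)
    rw [show n - ℓ + ℓ = n by ring] at h
    rw [show n - ℓ + ℓ' = n + d by rw [hdd]; ring] at h
    exact h
  have hf : ∀ n : ℤ, cut σ x n - cut σ x' (n + d) = cut σ x 0 - cut σ x' d := by
    intro n
    induction n using Int.induction_on with
    | zero => simp
    | succ n ih =>
      have e1 := Stmt16Aux.cut_succ σ x (n : ℤ)
      have e2 := Stmt16Aux.cut_succ σ x' ((n : ℤ) + d)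
      rw [show ((n : ℤ) + d) + 1 = (n : ℤ) + 1 + d by ring] at e2
      rw [hx (n : ℤ)] at e1
      linarith
    | pred n ih =>
      have e1 := Stmt16Aux.cut_succ σ x (-(n : ℤ) - 1)
      have e2 := Stmt16Aux.cut_succ σ x' (-(n : ℤ) - 1 + d)
      rw [show (-(n : ℤ) - 1) + 1 = -(n : ℤ) by ring] at e1
      rw [show (-(n : ℤ) - 1 + d) + 1 = -(n : ℤ) + d by ring] at e2
      rw [hx (-(n : ℤ) - 1)] at e1
      linarith
  have hcut0 : cut σ x 0 = 0 := by simp [cut]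
  have hkey : cut σ x' d = k' - k := by
    have h := hf ℓ
    rw [show ℓ + d = ℓ' by rw [hdd]; ring] at h
    rw [hcut0] at h
    linarith
  have hx0 : x 0 = x' d := by rw [hx 0, zero_add]
  have hd0 : d = 0 := by
    by_contra hne
    rcases lt_or_gt_of_ne hne with h | h
    · have hle := Stmt16Aux.cut_le σ x' (d := d) (by omega)
      rw [← hx0] at hle
      linarith
    · have hge := Stmt16Aux.cut_ge σ x' (d := d) (by omega)
      linarith
  have hkk : k = k' := by
    rw [hd0] at hkey
    have h0' : cut σ x' 0 = 0 := by simp [cut]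
    rw [h0'] at hkey
    omega
  refine ⟨hkk, funext fun n => ?_⟩
  rw [hx n, hd0, add_zero]
end

section
/- Let σ: 𝒜 → ℬ⁺ be a non-erasing morphism between finite alphabets that is injective on 𝒜^ℤ. If (k,x) and (k',x') are distinct centered σ-representations of some y ∈ ℬ^ℤ, then (k,x) and (k',x') have no common σ-cut, i.e., C_σ(k,x) ∩ C_σ(k',x') = ∅. -/
open scoped BigOperators

namespace Recog

theorem cut_succ' {A B : Type*} (σ : A → List B) (x : ℤ → A) (ℓ : ℤ) :
    cut σ x (ℓ + 1) = cut σ x ℓ + ((σ (x ℓ)).length : ℤ) := by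
  unfold cut
  rcases le_or_gt 0 ℓ with h | h
  · rw [if_pos h, if_pos (by omega)]
    have : (ℓ + 1).toNat = ℓ.toNat + 1 := by omega
    rw [this, Finset.sum_range_succ]
    rw [Int.toNat_of_nonneg h]
  · rcases eq_or_lt_of_le (show ℓ ≤ -1 by omega) with h1 | h1
    · subst h1
      rw [if_pos (by omega), if_neg (by omega)]
      norm_num
    · rw [if_neg (by omega), if_neg (by omega)]
      have : (-ℓ).toNat = (-(ℓ+1)).toNat + 1 := by omega
      rw [this, Finset.sum_range_succ]
      have : -((-(ℓ+1)).toNat : ℤ) - 1 = ℓ := by omega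
      rw [this]
      ring

theorem cut_zero' {A B : Type*} (σ : A → List B) (x : ℤ → A) : cut σ x 0 = 0 := by
  simp [cut]

theorem cut_strictMono' {A B : Type*} (σ : A → List B) (hσ : NonErasing σ) (x : ℤ → A) :
    StrictMono (cut σ x) := by
  apply strictMono_int_of_lt_succ
  intro ℓ
  rw [cut_succ']
  have := List.length_pos_iff.2 (hσ (x ℓ))
  omega

theorem cut_add' {A B : Type*} (σ : A → List B) (x : ℤ → A) (a b : ℤ) :
    cut σ x (a + b) = cut σ x a + cut σ (fun n => x (a + n)) b := by
  induction b using Int.induction_on with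
  | zero => simp [cut_zero']
  | succ b ih =>
    have h1 : a + ((b : ℤ) + 1) = (a + b) + 1 := by ring
    rw [h1, cut_succ', ih, cut_succ']
    ring
  | pred b ih =>
    have h1 : a + (-(b : ℤ) - 1) + 1 = a + (-(b:ℤ)) := by ring
    have h2 := cut_succ' σ x (a + (-(b : ℤ) - 1))
    rw [h1] at h2
    have h3 := cut_succ' σ (fun n => x (a + n)) (-(b : ℤ) - 1)
    simp only [sub_add_cancel] at h3
    omega

theorem isSubstPt_shift' {A B : Type*} (σ : A → List B) (x : ℤ → A) (u : ℤ → B)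
    (h : IsSubstPt σ x u) (a : ℤ) :
    IsSubstPt σ (fun n => x (a + n)) (fun n => u (n + cut σ x a)) := by
  intro ℓ j hj
  have key := h (a + ℓ) j hj
  show u (cut σ (fun n => x (a + n)) ℓ + j + cut σ x a) = _
  rw [show cut σ (fun n => x (a + n)) ℓ + j + cut σ x a = cut σ x (a + ℓ) + j from by
    rw [cut_add']; ring]
  exact key

end Recog

open Recog in
/-- For a morphism injective on `𝒜^ℤ`, distinct centered σ-representations of
the same point have no common σ-cut. -/
theorem stmt17 {A B : Type*} [Fintype A] [Fintype B]
    (σ : A → List B) (hσ : NonErasing σ) (hinj : InjZ σ)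
    (y : ℤ → B) (k k' : ℤ) (x x' : ℤ → A)
    (h1 : IsCenteredRep σ y k x) (h2 : IsCenteredRep σ y k' x')
    (hne : ¬(k = k' ∧ x = x')) :
    cutSet σ x k ∩ cutSet σ x' k' = ∅ := by
  ext m
  simp only [Set.mem_inter_iff, Set.mem_empty_iff_false, iff_false]
  rintro ⟨⟨l, hl⟩, ⟨l', hl'⟩⟩
  apply hne
  set xs : ℤ → A := fun n => x (l + n) with hxs
  set xs' : ℤ → A := fun n => x' (l' + n) with hxs'
  -- both shifted sequences are substitution points of z := fun n => y (n + m)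
  have hs1 := isSubstPt_shift' σ x (fun n => y (n - k)) h1.1 l
  have hs2 := isSubstPt_shift' σ x' (fun n => y (n - k')) h2.1 l'
  have he1 : (fun n => (fun n => y (n - k)) (n + cut σ x l)) = fun n => y (n + m) := by
    funext n; show y (n + cut σ x l - k) = _; congr 1; omega
  have he2 : (fun n => (fun n => y (n - k')) (n + cut σ x' l')) = fun n => y (n + m) := by
    funext n; show y (n + cut σ x' l' - k') = _; congr 1; omega
  rw [he1] at hs1
  rw [he2] at hs2
  have hxx : xs = xs' := hinj _ _ _ hs1 hs2
  set F := cut σ xs with hF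
  have hmono : StrictMono F := cut_strictMono' σ hσ xs
  have hFl : F (-l) = -(cut σ x l) := by
    have := cut_add' σ x l (-l)
    simp only [add_neg_cancel, cut_zero'] at this
    rw [← hxs, ← hF] at this
    omega
  have hFl' : F (-l') = -(cut σ x' l') := by
    have := cut_add' σ x' l' (-l')
    simp only [add_neg_cancel, cut_zero'] at this
    rw [← hxs'] at this
    rw [hF, hxx]
    omega
  have hFl1 : F (-l + 1) = -(cut σ x l) + ((σ (x 0)).length : ℤ) := by
    rw [hF, cut_succ', ← hF, hFl, hxs]
    simp
  have hFl1' : F (-l' + 1) = -(cut σ x' l') + ((σ (x' 0)).length : ℤ) := by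
    rw [hF, hxx, ← hxx, cut_succ']
    rw [hF] at hFl'
    rw [hxx] at hFl' ⊢
    rw [hFl', hxs']
    simp
  obtain ⟨-, hk0, hk1⟩ := h1
  obtain ⟨-, hk0', hk1'⟩ := h2
  -- -m lies in [F(-l), F(-l+1)) and in [F(-l'), F(-l'+1)); strict monotonicity forces l = l'
  have hin1 : F (-l) ≤ -m ∧ -m < F (-l + 1) := by rw [hFl, hFl1]; omega
  have hin1' : F (-l') ≤ -m ∧ -m < F (-l' + 1) := by rw [hFl', hFl1']; omega
  have hll : l = l' := by
    rcases lt_trichotomy (-l) (-l') with h | h | h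
    · have := hmono.monotone (show -l + 1 ≤ -l' by omega)
      omega
    · omega
    · have := hmono.monotone (show -l' + 1 ≤ -l by omega)
      omega
  subst hll
  have hcc : cut σ x l = cut σ x' l := by omega
  constructor
  · omega
  · funext n
    have := congrFun hxx (n - l)
    simp only [hxs, hxs'] at this
    have e1 : l + (n - l) = n := by ring
    rw [e1] at this
    exact this
end

section
/- Let σ: 𝒜 → ℬ⁺ and τ: ℬ → 𝒞⁺ be non-erasing morphisms between finite alphabets and z ∈ 𝒞^ℤ. If z has τ-representations (ℓ,y) and (ℓ',y') with no common τ-cut, and (k,x), (k',x') are centered σ-representations of y and y' respectively, then (ℓ + |τ(y_{[−k,0)})|, x) and (ℓ' + |τ(y'_{[−k',0)})|, x') are τ∘σ-representations of z with no common τ∘σ-cut. -/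
open scoped BigOperators

namespace RecogAux
open Recog
variable {A B C : Type*}

lemma cut_zero (σ : A → List B) (x : ℤ → A) : cut σ x 0 = 0 := by
  simp [cut]

lemma cut_succ (σ : A → List B) (x : ℤ → A) (ℓ : ℤ) :
    cut σ x (ℓ + 1) = cut σ x ℓ + ((σ (x ℓ)).length : ℤ) := by
  rcases le_or_gt 0 ℓ with h | h
  · rw [cut, cut, if_pos h, if_pos (show (0:ℤ) ≤ ℓ + 1 by omega)]
    have ht : (ℓ + 1).toNat = ℓ.toNat + 1 := by omega
    rw [ht, Finset.sum_range_succ, Int.toNat_of_nonneg h]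
  · rcases eq_or_lt_of_le (show ℓ + 1 ≤ 0 by omega) with h1 | h1
    · have hℓ : ℓ = -1 := by omega
      subst hℓ
      norm_num [cut, Finset.sum_range_one]
    · rw [cut, cut, if_neg (show ¬ (0:ℤ) ≤ ℓ + 1 by omega),
        if_neg (show ¬ (0:ℤ) ≤ ℓ by omega)]
      have ht : (-ℓ).toNat = (-(ℓ + 1)).toNat + 1 := by omega
      rw [ht, Finset.sum_range_succ]
      have he : (-(((-(ℓ + 1)).toNat : ℤ)) - 1) = ℓ := by omega
      rw [he]
      ring

lemma cut_pred (σ : A → List B) (x : ℤ → A) (ℓ : ℤ) :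
    cut σ x (ℓ - 1) = cut σ x ℓ - ((σ (x (ℓ - 1))).length : ℤ) := by
  have h := cut_succ σ x (ℓ - 1)
  rw [sub_add_cancel] at h
  omega

lemma factor_succ (x : ℤ → A) (i : ℤ) (n : ℕ) :
    factor x i (n + 1) = x i :: factor x (i + 1) n := by
  unfold factor
  rw [List.range_succ_eq_map]
  simp only [List.bind_eq_flatMap, List.pure_def, ← List.map_eq_flatMap, List.map_cons,
    List.map_map, Nat.cast_zero, add_zero]
  congr 1
  apply List.map_congr_left
  intro j _
  simp only [Function.comp_apply]
  congr 1
  push_cast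
  ring

lemma factor_zero (x : ℤ → A) (i : ℤ) : factor x i 0 = [] := rfl

lemma factor_length (x : ℤ → A) (i : ℤ) (m : ℕ) : (factor x i m).length = m := by
  induction m generalizing i with
  | zero => rfl
  | succ n ih => rw [factor_succ]; simp [ih]

lemma factor_getElem (x : ℤ → A) (i : ℤ) (m : ℕ) (j : ℕ) (hj : j < (factor x i m).length) :
    (factor x i m)[j] = x (i + j) := by
  induction m generalizing i j with
  | zero => rw [factor_length] at hj; omega
  | succ n ih =>
    rw [List.getElem_of_eq (factor_succ x i n) hj]
    rcases j with _ | j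
    · simp
    · have hb : j < (factor x (i + 1) n).length := by
        rw [factor_length]
        rw [factor_length] at hj
        omega
      simp only [List.getElem_cons_succ]
      rw [ih _ _ hb]
      congr 1
      push_cast
      ring

lemma cut_add_nat (τ : B → List C) (y : ℤ → B) (m : ℤ) (n : ℕ) :
    cut τ y (m + n) = cut τ y m + ((wordApply τ (factor y m n)).length : ℤ) := by
  induction n generalizing m with
  | zero =>
    show cut τ y (m + ((0 : ℕ) : ℤ)) = _
    rw [factor_zero]
    simp [wordApply]
  | succ n ih =>
    rw [factor_succ]
    show cut τ y (m + ((n : ℤ) + 1)) = _ + ((τ (y m) ++ wordApply τ (factor y (m + 1) n)).length : ℤ)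
    have h1 : m + ((n : ℤ) + 1) = (m + 1) + n := by ring
    rw [h1, ih, cut_succ]
    push_cast [List.length_append]
    ring

lemma cut_shift (σ : A → List B) (x : ℤ → A) (s ℓ : ℤ) :
    cut σ (fun n => x (n + s)) ℓ = cut σ x (ℓ + s) - cut σ x s := by
  induction ℓ using Int.induction_on with
  | zero => simp [cut_zero]
  | succ n ih =>
    rw [cut_succ, ih, show (n : ℤ) + 1 + s = (n + s) + 1 by ring, cut_succ]
    ring
  | pred n ih =>
    rw [show -(n : ℤ) - 1 = (-n) - 1 by ring, cut_pred, ih,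
      show -(n : ℤ) - 1 + s = (-n + s) - 1 by ring, cut_pred]
    ring

lemma isSubstPt_shift {σ : A → List B} {x : ℤ → A} {Y : ℤ → B}
    (h : IsSubstPt σ x Y) (s : ℤ) :
    IsSubstPt σ (fun n => x (n + s)) (fun n => Y (n + cut σ x s)) := by
  intro ℓ j hj
  have h2 := h (ℓ + s) j hj
  show Y (cut σ (fun n => x (n + s)) ℓ + j + cut σ x s) = _
  rw [cut_shift, show cut σ x (ℓ + s) - cut σ x s + (j : ℤ) + cut σ x s
    = cut σ x (ℓ + s) + j by ring]
  exact h2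

lemma read_wordApply {τ : B → List C} {Y : ℤ → B} {Z : ℤ → C}
    (h : IsSubstPt τ Y Z) (m : ℤ) (n : ℕ) :
    ∀ (j : ℕ) (hj : j < (wordApply τ (factor Y m n)).length),
      Z (cut τ Y m + j) = (wordApply τ (factor Y m n)).get ⟨j, hj⟩ := by
  induction n generalizing m with
  | zero =>
    intro j hj
    exact absurd (factor_zero Y m ▸ hj) (by simp [wordApply])
  | succ n ih =>
    intro j hj
    have hL : wordApply τ (factor Y m (n + 1))
        = τ (Y m) ++ wordApply τ (factor Y (m + 1) n) := by
      rw [factor_succ]; rfl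
    have hj' : j < (τ (Y m) ++ wordApply τ (factor Y (m + 1) n)).length := hL ▸ hj
    rw [List.get_of_eq hL ⟨j, hj⟩]
    simp only [List.get_eq_getElem]
    by_cases hc : j < (τ (Y m)).length
    · rw [List.getElem_append_left hc]
      exact h m j hc
    · push_neg at hc
      rw [List.getElem_append_right hc]
      have hj2 : j - (τ (Y m)).length < (wordApply τ (factor Y (m + 1) n)).length := by
        simp only [List.length_append] at hj'
        omega
      have h3 := ih (m + 1) (j - (τ (Y m)).length) hj2
      rw [cut_succ] at h3
      have he : cut τ Y m + (j : ℤ) =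
          cut τ Y m + ((τ (Y m)).length : ℤ) + ((j - (τ (Y m)).length : ℕ) : ℤ) := by
        omega
      rw [he, h3]
      simp [List.get_eq_getElem]

lemma factor_substPt {σ : A → List B} {x : ℤ → A} {Y : ℤ → B}
    (h : IsSubstPt σ x Y) (ℓ : ℤ) :
    factor Y (cut σ x ℓ) (σ (x ℓ)).length = σ (x ℓ) := by
  apply List.ext_getElem
  · rw [factor_length]
  · intro i h1 h2
    have h3 : i < (σ (x ℓ)).length := h2
    have := h ℓ i h3
    simp only [List.get_eq_getElem] at this
    rw [factor_getElem]
    exact this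

lemma cut_comp {σ : A → List B} (τ : B → List C) {x : ℤ → A} {Y : ℤ → B}
    (h : IsSubstPt σ x Y) (ℓ : ℤ) :
    cut (comp τ σ) x ℓ = cut τ Y (cut σ x ℓ) := by
  induction ℓ using Int.induction_on with
  | zero => simp [cut_zero]
  | succ n ih =>
    rw [cut_succ, ih, cut_succ, cut_add_nat τ Y (cut σ x n) (σ (x n)).length,
      factor_substPt h]
    rfl
  | pred n ih =>
    rw [show -(n : ℤ) - 1 = (-n) - 1 by ring, cut_pred, ih, cut_pred]
    have h2 := cut_add_nat τ Y (cut σ x ((-n : ℤ) - 1)) (σ (x ((-n : ℤ) - 1))).length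
    rw [factor_substPt h] at h2
    have h3 : cut σ x ((-n : ℤ) - 1) + ((σ (x ((-n : ℤ) - 1))).length : ℤ)
        = cut σ x (-n : ℤ) := by
      have := cut_pred σ x (-n : ℤ)
      omega
    rw [h3] at h2
    rw [show cut σ x (-(n : ℤ)) - ((σ (x (-(n : ℤ) - 1))).length : ℤ)
      = cut σ x (-(n : ℤ) - 1) by omega]
    have : ((comp τ σ (x ((-n : ℤ) - 1))).length : ℤ)
        = ((wordApply τ (σ (x ((-n : ℤ) - 1)))).length : ℤ) := rfl
    omega

lemma isSubstPt_comp {σ : A → List B} {τ : B → List C} {x : ℤ → A} {Y : ℤ → B} {Z : ℤ → C}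
    (h1 : IsSubstPt σ x Y) (h2 : IsSubstPt τ Y Z) : IsSubstPt (comp τ σ) x Z := by
  intro ℓ j hj
  have hj' : j < (wordApply τ (factor Y (cut σ x ℓ) (σ (x ℓ)).length)).length := by
    rw [factor_substPt h1]; exact hj
  have h3 := read_wordApply h2 (cut σ x ℓ) (σ (x ℓ)).length j hj'
  rw [cut_comp τ h1]
  rw [h3]
  have hL := factor_substPt h1 ℓ
  revert hj'
  rw [hL]
  intro hj' _
  rfl

end RecogAux

open RecogAux in
open Recog in
/-- τ-representations of `z` with no common τ-cut lift through centered
σ-representations to τ∘σ-representations of `z` with no common τ∘σ-cut. -/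
theorem stmt18 {A B C : Type*} [Fintype A] [Fintype B] [Fintype C]
    (σ : A → List B) (τ : B → List C) (hσ : NonErasing σ) (hτ : NonErasing τ)
    (z : ℤ → C) (ℓ ℓ' : ℤ) (y y' : ℤ → B)
    (hy : IsRep τ z ℓ y) (hy' : IsRep τ z ℓ' y')
    (hdisj : cutSet τ y ℓ ∩ cutSet τ y' ℓ' = ∅)
    (k k' : ℤ) (x x' : ℤ → A)
    (hx : IsCenteredRep σ y k x) (hx' : IsCenteredRep σ y' k' x') :
    IsRep (comp τ σ) z (ℓ + ((wordApply τ (factor y (-k) k.toNat)).length : ℤ)) x ∧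
    IsRep (comp τ σ) z (ℓ' + ((wordApply τ (factor y' (-k') k'.toNat)).length : ℤ)) x' ∧
    cutSet (comp τ σ) x (ℓ + ((wordApply τ (factor y (-k) k.toNat)).length : ℤ)) ∩
      cutSet (comp τ σ) x' (ℓ' + ((wordApply τ (factor y' (-k') k'.toNat)).length : ℤ)) =
        ∅ := by
  obtain ⟨hx1, hk0, hkx⟩ := hx
  obtain ⟨hx'1, hk'0, hk'x⟩ := hx'
  set c : ℕ := (wordApply τ (factor y (-k) k.toNat)).length with hcdef
  set c' : ℕ := (wordApply τ (factor y' (-k') k'.toNat)).length with hc'def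
  have hc : (c : ℤ) = -cut τ y (-k) := by
    have h := cut_add_nat τ y (-k) k.toNat
    rw [show (-k + (k.toNat : ℤ)) = 0 by omega, cut_zero] at h
    omega
  have hc' : (c' : ℤ) = -cut τ y' (-k') := by
    have h := cut_add_nat τ y' (-k') k'.toNat
    rw [show (-k' + (k'.toNat : ℤ)) = 0 by omega, cut_zero] at h
    omega
  have key : ∀ (ℓ₀ k₀ : ℤ) (y₀ : ℤ → B) (x₀ : ℤ → A) (c₀ : ℕ),
      IsRep τ z ℓ₀ y₀ → IsRep σ y₀ k₀ x₀ → (c₀ : ℤ) = -cut τ y₀ (-k₀) →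
      IsRep (comp τ σ) z (ℓ₀ + (c₀ : ℤ)) x₀ ∧
      cutSet (comp τ σ) x₀ (ℓ₀ + (c₀ : ℤ)) ⊆ cutSet τ y₀ ℓ₀ := by
    intro ℓ₀ k₀ y₀ x₀ c₀ hy₀ hx₀ hc₀
    have hsh := isSubstPt_shift (σ := τ) (x := y₀) (Y := fun n => z (n - ℓ₀)) hy₀ (-k₀)
    have h2 : IsSubstPt τ (fun n => y₀ (n + -k₀)) (fun n => z (n - (ℓ₀ + (c₀ : ℤ)))) := by
      intro m j hj
      have hh := hsh m j hj
      show z (cut τ (fun n => y₀ (n + -k₀)) m + (j : ℤ) - (ℓ₀ + (c₀ : ℤ)))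
          = (τ ((fun n => y₀ (n + -k₀)) m)).get ⟨j, hj⟩
      rw [show cut τ (fun n => y₀ (n + -k₀)) m + (j : ℤ) - (ℓ₀ + (c₀ : ℤ))
        = cut τ (fun n => y₀ (n + -k₀)) m + (j : ℤ) + cut τ y₀ (-k₀) - ℓ₀ by omega]
      exact hh
    refine ⟨isSubstPt_comp hx₀ h2, ?_⟩
    rintro m ⟨ℓ₁, rfl⟩
    refine ⟨cut σ x₀ ℓ₁ + -k₀, ?_⟩
    have h3 : cut τ (fun n => y₀ (n - k₀)) (cut σ x₀ ℓ₁)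
        = cut τ y₀ (cut σ x₀ ℓ₁ + -k₀) - cut τ y₀ (-k₀) :=
      cut_shift τ y₀ (-k₀) (cut σ x₀ ℓ₁)
    rw [cut_comp τ hx₀ (Y := fun n => y₀ (n - k₀)), h3]
    omega
  obtain ⟨hrep1, hsub1⟩ := key ℓ k y x c hy hx1 hc
  obtain ⟨hrep2, hsub2⟩ := key ℓ' k' y' x' c' hy' hx'1 hc'
  refine ⟨hrep1, hrep2, ?_⟩
  exact Set.eq_empty_of_subset_empty (hdisj ▸ Set.inter_subset_inter hsub1 hsub2)
end
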